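/- arXiv:math/0111124 — 8 statements merged into one kernel-verified Lean document; each statement's English description precedes it below -/
import Mathlib

section
/- Let A be a maximal dissipative operator on a Hilbert space and z ∈ ℂ with Im z > 0 such that z is not in the spectrum of A. Then I − b_z(A)* b_z(A) = 4 (Im z) (A* − z I)⁻¹ (Im A) (A − z̄ I)⁻¹, where b_z(A) = (A − zI)(A − z̄I)⁻¹, and consequently I − b_z(A)* b_z(A) ≥ 0 and rank(I − b_z(A)* b_z(A)) = rank(Im A). -/
set_option synthInstance.maxHeartbeats 1000000
set_option maxHeartbeats 1000000


open ContinuousLinearMap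

/-- For a (bounded) dissipative operator `A` and `z` in the upper half-plane outside the
spectrum, `I − b_z(A)* b_z(A) = 4 (Im z) (A* − z)⁻¹ (Im A) (A − z̄)⁻¹ ≥ 0`, and the rank of
`I − b_z(A)* b_z(A)` equals the rank of `Im A`. -/
theorem stmt_4 {H : Type*} [NormedAddCommGroup H] [InnerProductSpace ℂ H] [CompleteSpace H]
    (A : H →L[ℂ] H)
    (hdiss : (((2 * Complex.I)⁻¹ : ℂ) • (A - adjoint A)).IsPositive)
    (z : ℂ) (hz : 0 < z.im) (hspec : z ∉ spectrum ℂ A) :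
    (1 - adjoint ((A - z • 1) * Ring.inverse (A - (starRingEnd ℂ z) • 1)) *
        ((A - z • 1) * Ring.inverse (A - (starRingEnd ℂ z) • 1)) =
      ((4 * z.im : ℝ)) • (Ring.inverse (adjoint A - z • 1) *
        (((2 * Complex.I)⁻¹ : ℂ) • (A - adjoint A)) *
        Ring.inverse (A - (starRingEnd ℂ z) • 1))) ∧
    (1 - adjoint ((A - z • 1) * Ring.inverse (A - (starRingEnd ℂ z) • 1)) *
        ((A - z • 1) * Ring.inverse (A - (starRingEnd ℂ z) • 1))).IsPositive ∧
    LinearMap.rank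
      ((1 - adjoint ((A - z • 1) * Ring.inverse (A - (starRingEnd ℂ z) • 1)) *
        ((A - z • 1) * Ring.inverse (A - (starRingEnd ℂ z) • 1)) : H →L[ℂ] H) : H →ₗ[ℂ] H) =
      LinearMap.rank ((((2 * Complex.I)⁻¹ : ℂ) • (A - adjoint A) : H →L[ℂ] H) : H →ₗ[ℂ] H) := by
  set T : H →L[ℂ] H := ((2 * Complex.I)⁻¹ : ℂ) • (A - adjoint A) with hTdef
  set D : H →L[ℂ] H := A - (starRingEnd ℂ z) • 1 with hDdef
  set M : H →L[ℂ] H := A - z • 1 with hMdef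
  -- dissipativity : im ⟪A x, x⟫ ≤ 0
  have him : ∀ x : H, (inner ℂ (A x) x : ℂ).im ≤ 0 := by
    intro x
    have h := hdiss.2 x
    rw [reApplyInnerSelf_apply] at h
    simp only [hTdef, smul_apply, sub_apply, inner_smul_left, inner_sub_left,
      adjoint_inner_left, ← inner_conj_symm x (A x)] at h
    set w : ℂ := inner ℂ (A x) x with hw
    have hre : ((starRingEnd ℂ) ((2 * Complex.I)⁻¹) * (w - starRingEnd ℂ w)).re = -w.im := by
      have h2 : (starRingEnd ℂ) ((2 * Complex.I)⁻¹ : ℂ) = Complex.I/2 := by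
        simp [mul_inv, Complex.inv_I, map_mul, Complex.conj_I, map_ofNat]; ring
      rw [h2]; simp [Complex.ext_iff]; ring
    rw [RCLike.re_to_complex, hre] at h; linarith
  -- A - z̄ is invertible
  have hD : IsUnit D := by
    refine isUnit_of_forall_le_norm_inner_map _ (c := ⟨z.im, hz.le⟩) (by exact_mod_cast hz) ?_
    intro x
    have hin : (inner ℂ (D x) x : ℂ) = inner ℂ (A x) x - z * (‖x‖^2 : ℝ) := by
      simp [hDdef, inner_sub_left, inner_smul_left, inner_self_eq_norm_sq_to_K]; ring
    have h1 : (inner ℂ (D x) x : ℂ).im ≤ - (‖x‖^2 * z.im) := by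
      rw [hin]
      simp only [Complex.sub_im, Complex.mul_im, Complex.ofReal_re, Complex.ofReal_im]
      have := him x
      nlinarith [sq_nonneg ‖x‖]
    calc (‖x‖:ℝ)^2 * (⟨z.im, hz.le⟩ : NNReal) ≤ |(inner ℂ (D x) x : ℂ).im| := by
          show ‖x‖^2 * z.im ≤ _
          exact le_abs.mpr (Or.inr (by linarith))
      _ ≤ ‖(inner ℂ (D x) x : ℂ)‖ := Complex.abs_im_le_norm _
  set d : H →L[ℂ] H := Ring.inverse D with hddef
  have hDd : D * d = 1 := Ring.mul_inverse_cancel _ hD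
  have hdD : d * D = 1 := Ring.inverse_mul_cancel _ hD
  have hstarD : adjoint A - z • 1 = star D := by
    rw [hDdef]
    simp [star_sub, star_smul, star_one, star_eq_adjoint]
  have hinvE : Ring.inverse (adjoint A - z • 1) = star d := by
    rw [hstarD, hddef, Ring.inverse_star]
  -- key operator identity
  have key : star D * D - star M * M = (4 * z.im : ℝ) • T := by
    rw [hTdef, hDdef, hMdef, ← star_eq_adjoint]
    simp only [star_sub, star_smul, star_one, RCLike.star_def, starRingEnd_self_apply,
      sub_mul, mul_sub, smul_mul_assoc, mul_smul_comm, mul_one, one_mul, smul_smul, smul_sub]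
    match_scalars
    all_goals (simp [Complex.ext_iff]; try ring)
  -- main identity
  have hsds : star d * star D = 1 := by rw [← star_mul, hDd, star_one]
  have main : 1 - adjoint (M * d) * (M * d) = (4 * z.im : ℝ) • (star d * T * d) := by
    rw [← star_eq_adjoint, star_mul]
    have hone : (1 : H →L[ℂ] H) = star d * (star D * D) * d := by
      rw [← mul_assoc, hsds, one_mul]; exact hDd.symm
    rw [hone]
    calc star d * (star D * D) * d - star d * star M * (M * d)
        = star d * (star D * D - star M * M) * d := by
          simp only [mul_sub, sub_mul, mul_assoc]
      _ = (4 * z.im : ℝ) • (star d * T * d) := by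
          rw [key, mul_smul_comm, smul_mul_assoc]
  rw [hinvE]
  refine ⟨main, ?_, ?_⟩
  · -- positivity
    rw [main]
    set r : ℝ := Real.sqrt (4 * z.im) with hrdef
    have hr2 : r * r = 4 * z.im := Real.mul_self_sqrt (by linarith)
    have heq : ∀ S U : H →L[ℂ] H,
        (4 * z.im : ℝ) • (star U * S * U) = adjoint (r • U) * S * (r • U) := by
      intro S U
      rw [← star_eq_adjoint, star_smul, star_trivial r, smul_mul_assoc, smul_mul_assoc,
        mul_smul_comm, smul_smul, hr2]
    rw [heq T d]
    have := hdiss.adjoint_conj (r • d)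
    rw [mul_def, mul_def]; exact this
  · -- rank
    rw [main]
    set P : H →L[ℂ] H := star d * T * d with hP
    have hsandwich : ∀ (X Y S : H →L[ℂ] H),
        LinearMap.rank ((X * S * Y : H →L[ℂ] H) : H →ₗ[ℂ] H) ≤
          LinearMap.rank ((S : H →L[ℂ] H) : H →ₗ[ℂ] H) := by
      intro X Y S
      rw [mul_assoc, mul_def, mul_def, toLinearMap_comp, toLinearMap_comp]
      exact le_trans (LinearMap.rank_comp_le_right _ _)
        (LinearMap.rank_comp_le_left _ _)
    have h2 : star D * P * D = T := by
      rw [hP]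
      calc star D * (star d * T * d) * D
          = (star D * star d) * T * (d * D) := by
            simp only [mul_assoc]
        _ = T := by rw [← star_mul, hdD, star_one, one_mul, mul_one]
    have hle1 : LinearMap.rank ((P : H →L[ℂ] H) : H →ₗ[ℂ] H) ≤
        LinearMap.rank ((T : H →L[ℂ] H) : H →ₗ[ℂ] H) := hsandwich _ _ _
    have hle2 : LinearMap.rank ((T : H →L[ℂ] H) : H →ₗ[ℂ] H) ≤
        LinearMap.rank ((P : H →L[ℂ] H) : H →ₗ[ℂ] H) := by
      conv_lhs => rw [← h2]
      exact hsandwich _ _ _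
    have hcoe : (((4 * z.im : ℝ) • P : H →L[ℂ] H) : H →ₗ[ℂ] H)
        = ((4 * z.im : ℝ) : ℂ) • ((P : H →L[ℂ] H) : H →ₗ[ℂ] H) := by
      ext x; exact (Complex.coe_smul _ _).symm
    rw [hcoe]
    have hne : (((4 * z.im : ℝ)) : ℂ) ≠ 0 := by
      simp only [ne_eq, Complex.ofReal_eq_zero]; positivity
    have hr : LinearMap.range ((((4 * z.im : ℝ)) : ℂ) • ((P : H →L[ℂ] H) : H →ₗ[ℂ] H))
        = LinearMap.range ((P : H →L[ℂ] H) : H →ₗ[ℂ] H) :=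
      LinearMap.range_smul _ _ hne
    rw [LinearMap.rank, hr, ← LinearMap.rank]
    exact le_antisymm hle1 hle2
end

section
/- Let A be a maximal dissipative operator on a Hilbert space with rank(Im A) = n < ∞. Then for every z in the upper half-plane, 4 (Im z) · tr[(A* − zI)⁻¹ (Im A) (A − z̄I)⁻¹] ≤ n; i.e., the Uniform Trace Boundedness constant C₂(A) is at most n. -/
open ContinuousLinearMap

set_option maxHeartbeats 2000000
set_option synthInstance.maxHeartbeats 400000

section Aux

variable {H : Type*} [NormedAddCommGroup H] [InnerProductSpace ℂ H] [CompleteSpace H]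

local notation "⟪" x ", " y "⟫" => @inner ℂ _ _ x y

lemma aux_reK (A : H →L[ℂ] H) (v : H) :
    (⟪(((2 * Complex.I)⁻¹ : ℂ) • (A - adjoint A)) v, v⟫).re = -(⟪A v, v⟫).im := by
  have h1 : (((2 * Complex.I)⁻¹ : ℂ) • (A - adjoint A)) v
      = ((2 * Complex.I)⁻¹ : ℂ) • (A v - adjoint A v) := by simp
  rw [h1, inner_smul_left, inner_sub_left, ContinuousLinearMap.adjoint_inner_left]
  have h3 : ⟪v, A v⟫ = (starRingEnd ℂ) ⟪A v, v⟫ := (inner_conj_symm v (A v)).symm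
  rw [h3]
  set w : ℂ := ⟪A v, v⟫ with hw
  rw [Complex.sub_conj]
  have h2 : (starRingEnd ℂ) ((2 * Complex.I)⁻¹) = Complex.I / 2 := by
    simp [mul_inv, Complex.inv_I, Complex.conj_ofNat]
    ring
  rw [h2]
  simp [Complex.div_re, Complex.mul_re]

lemma aux_norm_diff (A : H →L[ℂ] H) (z : ℂ) (v : H) :
    ‖(A - (starRingEnd ℂ z) • 1) v‖ ^ 2
      = ‖(A - z • 1) v‖ ^ 2 - 4 * z.im * (⟪A v, v⟫).im := by
  have h1 : (A - (starRingEnd ℂ z) • 1) v = A v - (starRingEnd ℂ z) • v := by simp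
  have h2 : (A - z • 1) v = A v - z • v := by simp
  rw [h1, h2, norm_sub_sq (𝕜 := ℂ), norm_sub_sq (𝕜 := ℂ), inner_smul_right, inner_smul_right]
  simp only [norm_smul, RCLike.norm_conj, RCLike.re_to_complex, Complex.mul_re]
  simp only [Complex.conj_re, Complex.conj_im]
  ring

end Aux

section Aux2
variable {H : Type*} [NormedAddCommGroup H] [InnerProductSpace ℂ H] [CompleteSpace H]
local notation "⟪" x ", " y "⟫" => @inner ℂ _ _ x y

lemma aux_lower_bound (B : H →L[ℂ] H) (t : ℝ)
    (h : ∀ v, t * ‖v‖ ^ 2 ≤ |(⟪B v, v⟫).im|) (v : H) :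
    t * ‖v‖ ≤ ‖B v‖ := by
  rcases eq_or_ne ‖v‖ 0 with h0 | h0
  · rw [h0, mul_zero]; exact norm_nonneg _
  · have h1 : |(⟪B v, v⟫).im| ≤ ‖B v‖ * ‖v‖ := by
      refine le_trans (Complex.abs_im_le_norm _) ?_
      simpa using norm_inner_le_norm (𝕜 := ℂ) (B v) v
    have h2 := (h v).trans h1
    have h3 : 0 < ‖v‖ := lt_of_le_of_ne (norm_nonneg v) (Ne.symm h0)
    nlinarith

lemma aux_isUnit (B : H →L[ℂ] H) (c : ℝ) (hc : 0 < c)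
    (hB : ∀ v, c * ‖v‖ ≤ ‖B v‖) (hB' : ∀ v, c * ‖v‖ ≤ ‖adjoint B v‖) : IsUnit B := by
  rw [ContinuousLinearMap.isUnit_iff_bijective]
  have hanti : AntilipschitzWith ⟨c⁻¹, by positivity⟩ B := by
    apply B.antilipschitz_of_bound
    intro x
    show ‖x‖ ≤ c⁻¹ * ‖B x‖
    rw [inv_mul_eq_div, le_div_iff₀ hc, mul_comm]
    exact hB x
  refine (B.bijective_iff_dense_range_and_antilipschitz).2 ⟨?_, ⟨_, hanti⟩⟩
  rw [Submodule.topologicalClosure_eq_top_iff, Submodule.eq_bot_iff]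
  intro x hx
  have h1 : ⟪B (adjoint B x), x⟫ = 0 :=
    (Submodule.mem_orthogonal _ x).1 hx _ ⟨adjoint B x, rfl⟩
  have h2 : ⟪adjoint B x, adjoint B x⟫ = (0 : ℂ) := by
    rw [adjoint_inner_right]; exact h1
  have h0 : adjoint B x = 0 := inner_self_eq_zero.1 h2
  have h3 := hB' x
  rw [h0, norm_zero] at h3
  have := norm_nonneg x
  rw [← norm_eq_zero]
  nlinarith

end Aux2

section Main
variable {H : Type*} [NormedAddCommGroup H] [InnerProductSpace ℂ H] [CompleteSpace H]
local notation "⟪" x ", " y "⟫" => @inner ℂ _ _ x y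

theorem stmt_5' (A : H →L[ℂ] H)
    (hdiss : (((2 * Complex.I)⁻¹ : ℂ) • (A - adjoint A)).IsPositive)
    (n : ℕ)
    (hrank : LinearMap.rank
      ((((2 * Complex.I)⁻¹ : ℂ) • (A - adjoint A) : H →L[ℂ] H) : H →ₗ[ℂ] H) = n)
    (z : ℂ) (hz : 0 < z.im)
    {ι : Type*} (b : HilbertBasis ι ℂ H) :
    ∑' i, (inner ℂ
      (((4 * z.im : ℝ) • (Ring.inverse (adjoint A - z • 1) *
        (((2 * Complex.I)⁻¹ : ℂ) • (A - adjoint A)) *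
        Ring.inverse (A - (starRingEnd ℂ z) • 1))) (b i)) (b i) : ℂ).re ≤ (n : ℝ) := by
  set K : H →L[ℂ] H := ((2 * Complex.I)⁻¹ : ℂ) • (A - adjoint A) with hKdef
  have hK : K.IsPositive := hdiss
  have hKnn : (0 : H →L[ℂ] H) ≤ K := (nonneg_iff_isPositive K).2 hK
  set S : H →L[ℂ] H := CFC.sqrt K with hSdef
  have hS2 : S * S = K := CFC.sqrt_mul_sqrt_self K hKnn
  have hSsa : IsSelfAdjoint S := IsSelfAdjoint.of_nonneg (CFC.sqrt_nonneg K)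
  have hKS : ∀ v : H, (⟪K v, v⟫).re = ‖S v‖ ^ 2 := by
    intro v
    have h1 : K v = adjoint S (S v) := by
      rw [hSsa.adjoint_eq, ← ContinuousLinearMap.mul_apply, hS2]
    rw [h1, ContinuousLinearMap.adjoint_inner_left]
    rw [← inner_self_eq_norm_sq (𝕜 := ℂ)]
    rfl
  have him : ∀ v : H, (⟪A v, v⟫).im ≤ 0 := by
    intro v
    have h1 := hK.2 v
    have h2 : ContinuousLinearMap.reApplyInnerSelf K v = (⟪K v, v⟫).re := rfl
    rw [h2, aux_reK] at h1
    linarith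
  set t : ℝ := z.im with ht
  set D : H →L[ℂ] H := A - (starRingEnd ℂ z) • 1 with hDdef
  have hDv : ∀ v : H, D v = A v - (starRingEnd ℂ z) • v := by intro v; simp [hDdef]
  have hinnerD : ∀ v : H, ⟪D v, v⟫ = ⟪A v, v⟫ - z * (‖v‖ ^ 2 : ℝ) := by
    intro v
    rw [hDv, inner_sub_left, inner_smul_left, inner_self_eq_norm_sq_to_K]
    simp
  have hadjD : adjoint D = adjoint A - z • 1 := by
    rw [← ContinuousLinearMap.star_eq_adjoint, hDdef, star_sub, star_smul,
      ContinuousLinearMap.star_eq_adjoint]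
    simp
  have hinnerD' : ∀ v : H, ⟪adjoint D v, v⟫
      = (starRingEnd ℂ) ⟪A v, v⟫ - (starRingEnd ℂ z) * (‖v‖ ^ 2 : ℝ) := by
    intro v
    rw [hadjD]
    have : (adjoint A - z • 1) v = adjoint A v - z • v := by simp
    rw [this, inner_sub_left, inner_smul_left, inner_self_eq_norm_sq_to_K,
      ContinuousLinearMap.adjoint_inner_left, ← inner_conj_symm v (A v)]
    simp
  have hDlow : ∀ v : H, t * ‖v‖ ≤ ‖D v‖ := by
    apply aux_lower_bound
    intro v
    rw [hinnerD v]
    have h1 : ((⟪A v, v⟫) - z * (‖v‖ ^ 2 : ℝ)).im = (⟪A v, v⟫).im - t * ‖v‖ ^ 2 := by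
      simp only [Complex.sub_im, Complex.mul_im, ← Complex.ofReal_pow, Complex.ofReal_im,
        Complex.ofReal_re]
      ring
    rw [h1]
    refine le_abs.2 (Or.inr ?_)
    have := him v
    have := sq_nonneg ‖v‖
    linarith
  have hDlow' : ∀ v : H, t * ‖v‖ ≤ ‖adjoint D v‖ := by
    apply aux_lower_bound
    intro v
    rw [hinnerD' v]
    have h1 : ((starRingEnd ℂ) (⟪A v, v⟫) - (starRingEnd ℂ z) * (‖v‖ ^ 2 : ℝ)).im
        = -(⟪A v, v⟫).im + t * ‖v‖ ^ 2 := by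
      simp only [Complex.sub_im, Complex.mul_im, Complex.conj_im, Complex.conj_re,
        ← Complex.ofReal_pow, Complex.ofReal_im, Complex.ofReal_re]
      ring
    rw [h1]
    refine le_abs.2 (Or.inl ?_)
    have := him v
    linarith
  have hunit : IsUnit D := aux_isUnit D t hz hDlow hDlow'
  set R : H →L[ℂ] H := Ring.inverse D with hRdef
  have hDR : ∀ x : H, D (R x) = x := by
    intro x
    rw [← ContinuousLinearMap.mul_apply, Ring.mul_inverse_cancel D hunit,
      ContinuousLinearMap.one_apply]
  have hRstar : Ring.inverse (adjoint A - z • 1) = adjoint R := by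
    rw [← hadjD, ← ContinuousLinearMap.star_eq_adjoint, ← ContinuousLinearMap.star_eq_adjoint,
      Ring.inverse_star]
  -- diagonal entries
  have hdiag : ∀ x : H,
      (⟪((4 * t : ℝ) • (Ring.inverse (adjoint A - z • 1) * K * R)) x, x⟫).re
        = 4 * t * ‖S (R x)‖ ^ 2 := by
    intro x
    rw [hRstar]
    have h1 : ((4 * t : ℝ) • (adjoint R * K * R)) x
        = ((4 * t : ℝ) : ℂ) • (adjoint R (K (R x))) := by
      rw [ContinuousLinearMap.smul_apply, RCLike.real_smul_eq_coe_smul (K := ℂ)]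
      congr 1
    rw [h1, inner_smul_left, ContinuousLinearMap.adjoint_inner_left]
    have h2 : (starRingEnd ℂ) ((4 * t : ℝ) : ℂ) = ((4 * t : ℝ) : ℂ) := Complex.conj_ofReal _
    rw [h2]
    have h3 : (((4 * t : ℝ) : ℂ) * ⟪K (R x), R x⟫).re = (4 * t) * (⟪K (R x), R x⟫).re := by
      simp [Complex.mul_re]
    rw [h3, hKS]
  -- contraction property
  have hcontr : ∀ x : H, 4 * t * ‖S (R x)‖ ^ 2 ≤ ‖x‖ ^ 2 := by
    intro x
    have h1 := aux_norm_diff A z (R x)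
    rw [← hDdef, hDR x] at h1
    have h2 : 4 * t * (⟪K (R x), R x⟫).re = ‖x‖ ^ 2 - ‖(A - z • 1) (R x)‖ ^ 2 := by
      rw [aux_reK]; linarith
    rw [← hKS]
    have := sq_nonneg ‖(A - z • 1) (R x)‖
    linarith
  -- the operator N = S ∘ R and its adjoint bound
  set N : H →L[ℂ] H := S * R with hNdef
  have hs : 0 < Real.sqrt t := Real.sqrt_pos.2 hz
  have hsq : Real.sqrt t ^ 2 = t := Real.sq_sqrt hz.le
  have hNx : ∀ x : H, ‖N x‖ ≤ (2 * Real.sqrt t)⁻¹ * ‖x‖ := by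
    intro x
    have h1 := hcontr x
    have hNxe : N x = S (R x) := rfl
    rw [hNxe, inv_mul_eq_div, le_div_iff₀ (by positivity)]
    have h2 : (‖S (R x)‖ * (2 * Real.sqrt t)) ^ 2 ≤ ‖x‖ ^ 2 := by nlinarith
    exact le_of_pow_le_pow_left₀ two_ne_zero (norm_nonneg x) h2
  have hNop : ‖N‖ ≤ (2 * Real.sqrt t)⁻¹ :=
    ContinuousLinearMap.opNorm_le_bound N (by positivity) hNx
  have hadjN : ∀ w : H, ‖adjoint N w‖ ≤ (2 * Real.sqrt t)⁻¹ * ‖w‖ := by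
    intro w
    calc ‖adjoint N w‖ ≤ ‖adjoint N‖ * ‖w‖ := (adjoint N).le_opNorm w
    _ ≤ (2 * Real.sqrt t)⁻¹ * ‖w‖ := by
        have hne : ‖adjoint N‖ = ‖N‖ := LinearIsometryEquiv.norm_map ContinuousLinearMap.adjoint N
        rw [hne]
        exact mul_le_mul_of_nonneg_right hNop (norm_nonneg w)
  -- the finite-dimensional range of K
  set V : Submodule ℂ H := LinearMap.range ((K : H →L[ℂ] H) : H →ₗ[ℂ] H) with hVdef
  haveI hfd : FiniteDimensional ℂ V := Module.finite_of_rank_eq_nat hrank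
  have hfr : Module.finrank ℂ V = n := Module.finrank_eq_of_rank_eq hrank
  have hmemV : ∀ y : H, K y ∈ V := fun y => ⟨y, rfl⟩
  have hSV : ∀ x : H, S x ∈ V := by
    intro x
    rw [← Submodule.orthogonal_orthogonal V]
    rw [Submodule.mem_orthogonal]
    intro w hw
    have h1 : ⟪K (K w), w⟫ = 0 := (Submodule.mem_orthogonal V w).1 hw _ (hmemV (K w))
    have h3 := ContinuousLinearMap.adjoint_inner_left K w (K w)
    rw [hK.isSelfAdjoint.adjoint_eq] at h3
    have h2 : ⟪K w, K w⟫ = (0 : ℂ) := by rw [← h3]; exact h1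
    have hKw : K w = 0 := inner_self_eq_zero.1 h2
    have hSw : S w = 0 := by
      have h4 : ‖S w‖ ^ 2 = 0 := by rw [← hKS w, hKw]; simp
      have h5 : ‖S w‖ = 0 := by
        have := pow_eq_zero_iff (n := 2) two_ne_zero |>.1 h4
        exact this
      exact norm_eq_zero.1 h5
    have h6 := ContinuousLinearMap.adjoint_inner_left S x w
    rw [hSsa.adjoint_eq] at h6
    rw [← h6, hSw, inner_zero_left]
  -- orthonormal basis of V
  set m : ℕ := Module.finrank ℂ V with hm
  let u : OrthonormalBasis (Fin m) ℂ V := stdOrthonormalBasis ℂ V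
  have hnorm_u : ∀ j, ‖(u j : H)‖ = 1 := fun j => u.orthonormal.1 j
  have hParseval : ∀ w : V, ‖(w : H)‖ ^ 2 = ∑ j, ‖⟪((u j : H)), (w : H)⟫‖ ^ 2 := by
    intro w
    have h1 : ‖(w : H)‖ = ‖u.repr w‖ := (u.repr.norm_map w).symm
    have h2 : ‖u.repr w‖ ^ 2 = ∑ j, ‖u.repr w j‖ ^ 2 := by
      rw [EuclideanSpace.norm_eq, Real.sq_sqrt (by positivity)]
    rw [h1, h2]
    apply Finset.sum_congr rfl
    intro j _
    rw [u.repr_apply_apply]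
    rfl
  -- Parseval per basis vector of V
  have hHas : ∀ j : Fin m, HasSum (fun i => ‖⟪b i, adjoint N ((u j : H))⟫‖ ^ 2)
      (‖adjoint N ((u j : H))‖ ^ 2) := by
    intro j
    set y : H := adjoint N ((u j : H)) with hy
    have h1 := b.hasSum_inner_mul_inner y y
    have h2 := (Complex.reCLM).hasSum h1
    have h3 : Complex.reCLM (⟪y, y⟫ : ℂ) = ‖y‖ ^ 2 := by
      rw [Complex.reCLM_apply, ← inner_self_eq_norm_sq (𝕜 := ℂ)]; rfl
    rw [h3] at h2
    convert h2 using 2 with i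
    rw [Complex.reCLM_apply, ← inner_conj_symm (b i) y]
    simp only [Complex.mul_re, Complex.conj_re, Complex.conj_im,
      Complex.sq_norm, Complex.normSq_apply]
    ring
  -- identification of each diagonal entry
  have hterm : ∀ i : ι,
      (⟪((4 * t : ℝ) • (Ring.inverse (adjoint A - z • 1) * K * R)) (b i), b i⟫).re
        = ∑ j, (4 * t) * ‖⟪b i, adjoint N ((u j : H))⟫‖ ^ 2 := by
    intro i
    rw [hdiag (b i), ← Finset.mul_sum]
    congr 1
    have h1 := hParseval ⟨S (R (b i)), hSV _⟩
    rw [h1]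
    apply Finset.sum_congr rfl
    intro j _
    have e1 : S (R (b i)) = N (b i) := rfl
    have e2 : ⟪N (b i), (u j : H)⟫ = ⟪b i, adjoint N ((u j : H))⟫ :=
      (ContinuousLinearMap.adjoint_inner_right N (b i) (u j)).symm
    have h2 : ⟪(u j : H), (S (R (b i)) : H)⟫
        = (starRingEnd ℂ) ⟪b i, adjoint N ((u j : H))⟫ := by
      rw [← e2, ← e1, inner_conj_symm]
    rw [h2, RCLike.norm_conj]
  -- total sum
  have hHasTotal : HasSum
      (fun i => ∑ j, (4 * t) * ‖⟪b i, adjoint N ((u j : H))⟫‖ ^ 2)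
      (∑ j, (4 * t) * ‖adjoint N ((u j : H))‖ ^ 2) :=
    hasSum_sum (fun j _ => (hHas j).mul_left (4 * t))
  have hfun : (fun i : ι =>
      (⟪((4 * t : ℝ) • (Ring.inverse (adjoint A - z • 1) * K * R)) (b i), b i⟫).re)
      = fun i => ∑ j, (4 * t) * ‖⟪b i, adjoint N ((u j : H))⟫‖ ^ 2 := funext hterm
  calc ∑' i, (⟪((4 * t : ℝ) • (Ring.inverse (adjoint A - z • 1) * K * R)) (b i), b i⟫).re
      = ∑ j, (4 * t) * ‖adjoint N ((u j : H))‖ ^ 2 := by rw [hfun]; exact hHasTotal.tsum_eq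
  _ ≤ ∑ _j : Fin m, (1 : ℝ) := by
      apply Finset.sum_le_sum
      intro j _
      have h1 := hadjN ((u j : H))
      rw [hnorm_u j, mul_one] at h1
      have h2 : ‖adjoint N ((u j : H))‖ ^ 2 ≤ ((2 * Real.sqrt t)⁻¹) ^ 2 :=
        pow_le_pow_left₀ (norm_nonneg _) h1 2
      have h3 : ((2 * Real.sqrt t)⁻¹) ^ 2 = (4 * t)⁻¹ := by
        rw [inv_pow]
        congr 1
        nlinarith
      rw [h3] at h2
      have h4 : 0 < 4 * t := by linarith
      calc (4 * t) * ‖adjoint N ((u j : H))‖ ^ 2 ≤ (4 * t) * (4 * t)⁻¹ :=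
        mul_le_mul_of_nonneg_left h2 h4.le
      _ = 1 := mul_inv_cancel₀ h4.ne'
  _ = (n : ℝ) := by
      rw [Finset.sum_const, Finset.card_univ, Fintype.card_fin, hfr]
      simp

end Main


/-- If `A` is dissipative with `rank (Im A) = n < ∞`, then for every `z` in the upper
half-plane the trace of the positive operator
`4 (Im z) (A* − z)⁻¹ (Im A)(A − z̄)⁻¹ = I − b_z(A)* b_z(A)` is at most `n`
(the trace being computed as the sum of diagonal matrix entries in a Hilbert basis). -/
theorem stmt_5 {H : Type*} [NormedAddCommGroup H] [InnerProductSpace ℂ H] [CompleteSpace H]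
    (A : H →L[ℂ] H)
    (hdiss : (((2 * Complex.I)⁻¹ : ℂ) • (A - adjoint A)).IsPositive)
    (n : ℕ)
    (hrank : LinearMap.rank
      ((((2 * Complex.I)⁻¹ : ℂ) • (A - adjoint A) : H →L[ℂ] H) : H →ₗ[ℂ] H) = n)
    (z : ℂ) (hz : 0 < z.im)
    {ι : Type*} (b : HilbertBasis ι ℂ H) :
    ∑' i, (inner ℂ
      (((4 * z.im : ℝ) • (Ring.inverse (adjoint A - z • 1) *
        (((2 * Complex.I)⁻¹ : ℂ) • (A - adjoint A)) *
        Ring.inverse (A - (starRingEnd ℂ z) • 1))) (b i)) (b i) : ℂ).re ≤ (n : ℝ) :=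
  stmt_5' A hdiss n hrank z hz b
end

section
/- Let Λ = {z_k} be a Carleson sequence in the upper half-plane, i.e., inf_{z∈Λ} Π_{w∈Λ∖{z}} |b_w(z)| ≥ δ₀ > 0, where b_w(z) = (z−w)/(z−w̄). Then there exists a constant c = c(δ₀) > 0 such that Π_{w∈Λ} |b_w(z)| ≥ c · inf_{w∈Λ} |b_w(z)| for all z ∈ ℂ₊. -/
open ComplexConjugate Real



lemma sq_abs_sub_conj (u w : ℂ) :
    (‖u - conj w‖)^2 = (‖u - w‖)^2 + 4 * u.im * w.im := by
  rw [Complex.sq_norm, Complex.sq_norm, Complex.normSq_apply, Complex.normSq_apply]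
  simp [Complex.sub_re, Complex.sub_im]
  ring

lemma sq_abs_sub_conj' (u w : ℂ) :
    (‖u - conj w‖)^2 = (u.re - w.re)^2 + (u.im + w.im)^2 := by
  rw [Complex.sq_norm, Complex.normSq_apply]
  simp [Complex.sub_re, Complex.sub_im]
  ring

lemma denom_ne (u w : ℂ) (hu : 0 < u.im) (hw : 0 < w.im) : u - conj w ≠ 0 := by
  intro h
  have : (u - conj w).im = 0 := by rw [h]; simp
  simp [Complex.sub_im] at this
  linarith

lemma abs_denom_pos (u w : ℂ) (hu : 0 < u.im) (hw : 0 < w.im) :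
    0 < ‖u - conj w‖ := by
  rw [norm_pos_iff]; exact denom_ne u w hu hw

lemma im_le_abs_denom (u w : ℂ) (hu : 0 < u.im) (hw : 0 < w.im) :
    u.im + w.im ≤ ‖u - conj w‖ := by
  have h := Complex.abs_im_le_norm (u - conj w)
  have : (u - conj w).im = u.im + w.im := by simp [Complex.sub_im]
  rw [this] at h
  calc u.im + w.im ≤ |u.im + w.im| := le_abs_self _
    _ ≤ _ := h

lemma re_abs_le_abs_denom (u w : ℂ) : |u.re - w.re| ≤ ‖u - conj w‖ := by
  have h := Complex.abs_re_le_norm (u - conj w)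
  have : (u - conj w).re = u.re - w.re := by simp [Complex.sub_re]
  rwa [this] at h

lemma rho_nonneg (u w : ℂ) : 0 ≤ ‖(u - w)/(u - conj w)‖ := norm_nonneg _

lemma rho_le_one (u w : ℂ) (hu : 0 < u.im) (hw : 0 < w.im) : ‖(u - w)/(u - conj w)‖ ≤ 1 := by
  rw [norm_div]
  have hd := abs_denom_pos u w hu hw
  rw [div_le_one hd]
  nlinarith [sq_abs_sub_conj u w, norm_nonneg (u - w), norm_nonneg (u - conj w),
    mul_pos hu hw]

lemma one_sub_rho_sq (u w : ℂ) (hu : 0 < u.im) (hw : 0 < w.im) :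
    1 - ‖(u - w)/(u - conj w)‖^2 = 4 * u.im * w.im / (‖u - conj w‖)^2 := by
  have hd := abs_denom_pos u w hu hw
  rw [norm_div, div_pow, eq_div_iff (by positivity),
    sub_mul, div_mul_cancel₀ _ (by positivity), one_mul]
  linarith [sq_abs_sub_conj u w]

lemma rho_symm (u w : ℂ) : ‖(u - w)/(u - conj w)‖ = ‖(w - u)/(w - conj u)‖ := by
  rw [norm_div, norm_div]
  have h1 : ‖u - w‖ = ‖w - u‖ := norm_sub_rev u w
  have h2 : ‖u - conj w‖ = ‖w - conj u‖ := by
    rw [← Complex.norm_conj (u - conj w)]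
    simp only [map_sub, Complex.conj_conj]
    exact norm_sub_rev _ _
  rw [h1, h2]

lemma tanh_mono {a b : ℝ} (hab : a ≤ b) : tanh a ≤ tanh b := by
  rw [tanh_eq_sinh_div_cosh, tanh_eq_sinh_div_cosh,
    div_le_div_iff₀ (cosh_pos a) (cosh_pos b)]
  nlinarith [Real.sinh_sub b a, sinh_nonneg_iff.2 (sub_nonneg.2 hab)]

lemma tanh_add_le {x y : ℝ} (hx : 0 ≤ x) (hy : 0 ≤ y) :
    tanh (x + y) ≤ tanh x + tanh y := by
  have hsx : 0 ≤ sinh x := sinh_nonneg_iff.2 hx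
  have hsy : 0 ≤ sinh y := sinh_nonneg_iff.2 hy
  have hcx : (1:ℝ) ≤ cosh x := one_le_cosh x
  have hcy : (1:ℝ) ≤ cosh y := one_le_cosh y
  have hcxy : (0:ℝ) < cosh (x+y) := cosh_pos (x+y)
  rw [tanh_eq_sinh_div_cosh, tanh_eq_sinh_div_cosh, tanh_eq_sinh_div_cosh]
  rw [div_add_div _ _ (by linarith) (by linarith), div_le_div_iff₀ hcxy (by positivity)]
  rw [Real.sinh_add, Real.cosh_add]
  nlinarith [mul_nonneg (add_nonneg (mul_nonneg hsx (by linarith : (0:ℝ) ≤ cosh y))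
      (mul_nonneg (by linarith : (0:ℝ) ≤ cosh x) hsy)) (mul_nonneg hsx hsy)]

lemma rho_triangle (u v w : ℂ) (hu : 0 < u.im) (hv : 0 < v.im) (hw : 0 < w.im) :
    ‖(u - w)/(u - conj w)‖ ≤ ‖(u - v)/(u - conj v)‖ + ‖(v - w)/(v - conj w)‖ := by
  set A : UpperHalfPlane := ⟨u, hu⟩
  set B : UpperHalfPlane := ⟨v, hv⟩
  set C : UpperHalfPlane := ⟨w, hw⟩
  have r1 : ‖(u - w)/(u - conj w)‖ = Real.tanh (dist A C / 2) := by
    rw [UpperHalfPlane.tanh_half_dist, Complex.dist_eq, Complex.dist_eq, norm_div]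
  have r2 : ‖(u - v)/(u - conj v)‖ = Real.tanh (dist A B / 2) := by
    rw [UpperHalfPlane.tanh_half_dist, Complex.dist_eq, Complex.dist_eq, norm_div]
  have r3 : ‖(v - w)/(v - conj w)‖ = Real.tanh (dist B C / 2) := by
    rw [UpperHalfPlane.tanh_half_dist, Complex.dist_eq, Complex.dist_eq, norm_div]
  rw [r1, r2, r3]
  have tri : dist A C ≤ dist A B + dist B C := dist_triangle A B C
  calc Real.tanh (dist A C / 2) ≤ Real.tanh ((dist A B + dist B C) / 2) := by
        apply tanh_mono; linarith
    _ = Real.tanh (dist A B / 2 + dist B C / 2) := by ring_nf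
    _ ≤ Real.tanh (dist A B / 2) + Real.tanh (dist B C / 2) := by
        apply tanh_add_le <;> positivity

lemma tprod_le_finprod {f : ℕ → ℝ} (h0 : ∀ j, 0 ≤ f j) (h1 : ∀ j, f j ≤ 1) (F : Finset ℕ) :
    ∏' j, f j ≤ ∏ j ∈ F, f j := by
  have hant : Antitone (fun s : Finset ℕ => ∏ j ∈ s, f j) := by
    intro s t hst
    calc ∏ j ∈ t, f j = (∏ j ∈ t \ s, f j) * ∏ j ∈ s, f j := (Finset.prod_sdiff hst).symm
      _ ≤ 1 * ∏ j ∈ s, f j := by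
          apply mul_le_mul_of_nonneg_right
          · exact Finset.prod_le_one (fun i _ => h0 i) (fun i _ => h1 i)
          · exact Finset.prod_nonneg (fun i _ => h0 i)
      _ = ∏ j ∈ s, f j := one_mul _
  have hbdd : BddBelow (Set.range fun s : Finset ℕ => ∏ j ∈ s, f j) := by
    refine ⟨0, ?_⟩
    rintro x ⟨s, rfl⟩
    exact Finset.prod_nonneg (fun i _ => h0 i)
  have hP : HasProd f (⨅ s : Finset ℕ, ∏ j ∈ s, f j) := tendsto_atTop_ciInf hant hbdd
  rw [hP.tprod_eq]
  exact ciInf_le hbdd F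


lemma lemA (z : ℕ → ℂ) (hz : ∀ k, 0 < (z k).im) (A : ℝ) (hA : 0 ≤ A)
    (hker : ∀ k (F : Finset ℕ), k ∉ F →
      ∑ j ∈ F, (z k).im * (z j).im / (‖z k - conj (z j)‖)^2 ≤ A/4) :
    ∀ F : Finset ℕ, ∀ l r h : ℝ, 0 ≤ h → l ≤ r →
      (∀ j ∈ F, l ≤ (z j).re ∧ (z j).re ≤ r ∧ (z j).im ≤ h) →
      ∑ j ∈ F, (z j).im ≤ (1 + 2*A) * (r - l + h) := by
  intro F
  induction F using Finset.strongInductionOn with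
  | _ F IH =>
  intro l r h hh hlr hbnd
  rcases F.eq_empty_or_nonempty with rfl | hFne
  · simp only [Finset.sum_empty]
    nlinarith
  obtain ⟨k, hkF, hkmax⟩ := F.exists_max_image (fun j => (z j).im) hFne
  set xk := (z k).re with hxk
  set yk := (z k).im with hyk
  have hyk0 : 0 < yk := hz k
  set C := 1 + 2*A with hC
  have hC1 : (1:ℝ) ≤ C := by simp [hC]; linarith
  -- split F into L, rest
  set L := F.filter (fun j => (z j).re < xk - 2*yk) with hL
  set F2 := F.filter (fun j => ¬ ((z j).re < xk - 2*yk)) with hF2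
  have hsplit1 : ∑ j ∈ L, (z j).im + ∑ j ∈ F2, (z j).im = ∑ j ∈ F, (z j).im :=
    Finset.sum_filter_add_sum_filter_not F _ _
  set R := F2.filter (fun j => xk + 2*yk < (z j).re) with hR
  set M := F2.filter (fun j => ¬ (xk + 2*yk < (z j).re)) with hM
  have hsplit2 : ∑ j ∈ R, (z j).im + ∑ j ∈ M, (z j).im = ∑ j ∈ F2, (z j).im :=
    Finset.sum_filter_add_sum_filter_not F2 _ _
  -- k is in M
  have hkM : k ∈ M := by
    rw [hM, Finset.mem_filter, hF2, Finset.mem_filter]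
    refine ⟨⟨hkF, ?_⟩, ?_⟩ <;> push_neg <;> linarith
  -- bound on M
  have hMbound : ∑ j ∈ M, (z j).im ≤ C * yk := by
    have hMe : ∑ j ∈ M, (z j).im = yk + ∑ j ∈ M.erase k, (z j).im := by
      rw [← Finset.add_sum_erase _ _ hkM]
    have hker' := hker k (M.erase k) (Finset.notMem_erase k M)
    have hterm : ∀ j ∈ M.erase k, (z j).im / (8 * yk) ≤
        (z k).im * (z j).im / (‖z k - conj (z j)‖)^2 := by
      intro j hj
      have hjM : j ∈ M := Finset.mem_of_mem_erase hj
      have hjF : j ∈ F := by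
        rw [hM, Finset.mem_filter] at hjM
        rw [hF2, Finset.mem_filter] at hjM
        exact hjM.1.1
      have h1 : ¬ ((z j).re < xk - 2*yk) := by
        rw [hM, Finset.mem_filter, hF2, Finset.mem_filter] at hjM; exact hjM.1.2
      have h2 : ¬ (xk + 2*yk < (z j).re) := by
        rw [hM, Finset.mem_filter] at hjM; exact hjM.2
      push_neg at h1 h2
      have hyj : 0 < (z j).im := hz j
      have hyjk : (z j).im ≤ yk := hkmax j hjF
      have habs : (‖z k - conj (z j)‖)^2 ≤ 8 * yk^2 := by
        rw [sq_abs_sub_conj']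
        have : ((z k).re - (z j).re)^2 ≤ (2*yk)^2 := by
          apply sq_le_sq'
          · linarith
          · linarith
        nlinarith
      have habs0 : 0 < (‖z k - conj (z j)‖)^2 := by
        rw [sq_abs_sub_conj']
        nlinarith
      rw [div_le_div_iff₀ (by positivity) habs0]
      calc (z j).im * (‖z k - conj (z j)‖)^2 ≤ (z j).im * (8 * yk^2) := by
            apply mul_le_mul_of_nonneg_left habs hyj.le
        _ = (z k).im * (z j).im * (8 * yk) := by rw [← hyk]; ring
    have hsum : ∑ j ∈ M.erase k, (z j).im / (8 * yk) ≤ A/4 :=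
      le_trans (Finset.sum_le_sum hterm) hker'
    rw [← Finset.sum_div] at hsum
    have : ∑ j ∈ M.erase k, (z j).im ≤ 2 * A * yk := by
      rw [div_le_iff₀ (by positivity)] at hsum
      linarith [hsum]
    rw [hMe, hC]
    linarith
  -- bounds on L and R by induction
  have hLsub : L ⊂ F := by
    rw [hL]
    refine Finset.filter_ssubset.2 ⟨k, hkF, ?_⟩
    push_neg; linarith
  have hRsub : R ⊂ F := by
    constructor
    · rw [hR, hF2]
      exact (Finset.filter_subset _ _).trans (Finset.filter_subset _ _)
    · intro hFR
      have := hFR hkF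
      rw [hR, Finset.mem_filter] at this
      have := this.2
      linarith
  have hLbound : ∑ j ∈ L, (z j).im ≤ C * (xk - yk - l) ∨
      (L = ∅ ∧ ∑ j ∈ L, (z j).im = 0) := by
    rcases L.eq_empty_or_nonempty with hLe | hLne
    · right; exact ⟨hLe, by rw [hLe]; simp⟩
    · left
      obtain ⟨j0, hj0⟩ := hLne
      have hj0L := hj0
      rw [hL, Finset.mem_filter] at hj0L
      have hbl : l ≤ xk - 2*yk := by
        have := (hbnd j0 hj0L.1).1
        linarith [hj0L.2]
      have := IH L hLsub l (xk - 2*yk) yk hyk0.le hbl ?_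
      · calc ∑ j ∈ L, (z j).im ≤ C * (xk - 2*yk - l + yk) := this
          _ = C * (xk - yk - l) := by ring
      · intro j hj
        rw [hL, Finset.mem_filter] at hj
        exact ⟨(hbnd j hj.1).1, by linarith [hj.2], hkmax j hj.1⟩
  have hRbound : ∑ j ∈ R, (z j).im ≤ C * (r - xk - yk) ∨
      (R = ∅ ∧ ∑ j ∈ R, (z j).im = 0) := by
    rcases R.eq_empty_or_nonempty with hRe | hRne
    · right; exact ⟨hRe, by rw [hRe]; simp⟩
    · left
      obtain ⟨j0, hj0⟩ := hRne
      have hj0R := hj0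
      rw [hR, Finset.mem_filter, hF2, Finset.mem_filter] at hj0R
      have hbr : xk + 2*yk ≤ r := by
        have := (hbnd j0 hj0R.1.1).2.1
        linarith [hj0R.2]
      have := IH R hRsub (xk + 2*yk) r yk hyk0.le hbr ?_
      · calc ∑ j ∈ R, (z j).im ≤ C * (r - (xk + 2*yk) + yk) := this
          _ = C * (r - xk - yk) := by ring
      · intro j hj
        rw [hR, Finset.mem_filter, hF2, Finset.mem_filter] at hj
        exact ⟨by linarith [hj.2], (hbnd j hj.1.1).2.1, hkmax j hj.1.1⟩
  -- combine
  have hxkl : l ≤ xk := (hbnd k hkF).1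
  have hxkr : xk ≤ r := (hbnd k hkF).2.1
  have hykh : yk ≤ h := (hbnd k hkF).2.2
  have hC0 : (0:ℝ) ≤ C := by linarith
  rw [← hsplit1, ← hsplit2]
  rcases hLbound with hLb | ⟨_, hLb⟩ <;> rcases hRbound with hRb | ⟨_, hRb⟩
  · nlinarith [mul_le_mul_of_nonneg_left hykh hC0]
  · rw [hRb]
    nlinarith [mul_le_mul_of_nonneg_left hykh hC0, mul_le_mul_of_nonneg_left hxkr hC0]
  · rw [hLb]
    nlinarith [mul_le_mul_of_nonneg_left hykh hC0, mul_le_mul_of_nonneg_left hxkl hC0]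
  · rw [hLb, hRb]
    nlinarith [mul_le_mul_of_nonneg_left hykh hC0, mul_le_mul_of_nonneg_left hlr hC0]


lemma lemB (z : ℕ → ℂ) (hz : ∀ k, 0 < (z k).im) (A : ℝ) (hA : 0 ≤ A)
    (hker : ∀ k (F : Finset ℕ), k ∉ F →
      ∑ j ∈ F, (z k).im * (z j).im / (‖z k - conj (z j)‖)^2 ≤ A/4)
    (ζ : ℂ) (hζ : 0 < ζ.im) (F : Finset ℕ) :
    ∑ j ∈ F, ζ.im * (z j).im / (‖ζ - conj (z j)‖)^2 ≤ 12 * (1 + 2*A) := by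
  classical
  set y := ζ.im with hy
  set x := ζ.re with hx
  set C := 1 + 2*A with hCdef
  have hC0 : (0:ℝ) < C := by rw [hCdef]; linarith
  set q : ℕ → ℝ := fun j => ‖ζ - conj (z j)‖ / y with hq
  have hq1 : ∀ j, 1 ≤ q j := by
    intro j
    rw [hq]
    rw [le_div_iff₀ hζ]
    have := im_le_abs_denom ζ (z j) hζ (hz j)
    have := (hz j)
    simp only [one_mul]
    linarith
  set n : ℕ → ℕ := fun j => Nat.log 2 ⌊q j⌋₊ with hn
  have hqb : ∀ j, (2:ℝ)^(n j) ≤ q j ∧ q j < (2:ℝ)^(n j + 1) := by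
    intro j
    have hfl1 : 1 ≤ ⌊q j⌋₊ := Nat.le_floor (by exact_mod_cast hq1 j)
    constructor
    · calc ((2:ℝ))^(n j) = ((2^(n j) : ℕ) : ℝ) := by push_cast; ring
        _ ≤ (⌊q j⌋₊ : ℝ) := by
            exact_mod_cast Nat.pow_log_le_self 2 (by omega)
        _ ≤ q j := Nat.floor_le (by linarith [hq1 j])
    · have h1 : ⌊q j⌋₊ < 2^(n j + 1) := Nat.lt_pow_succ_log_self (by norm_num) _
      have h2 : q j < (⌊q j⌋₊ : ℝ) + 1 := Nat.lt_floor_add_one _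
      have h3 : (⌊q j⌋₊ : ℝ) + 1 ≤ (2:ℝ)^(n j + 1) := by
        have : ⌊q j⌋₊ + 1 ≤ 2^(n j + 1) := h1
        exact_mod_cast this
      linarith
  -- fiberwise sum
  have hmaps : ∀ j ∈ F, n j ∈ F.image n := fun j hj => Finset.mem_image_of_mem n hj
  rw [← Finset.sum_fiberwise_of_maps_to hmaps (fun j => ζ.im * (z j).im / (‖ζ - conj (z j)‖)^2)]
  -- bound each fiber
  have hfiber : ∀ m ∈ F.image n,
      ∑ j ∈ F.filter (fun j => n j = m), ζ.im * (z j).im / (‖ζ - conj (z j)‖)^2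
        ≤ 6 * C * (1/2:ℝ)^m := by
    intro m _
    set G := F.filter (fun j => n j = m) with hG
    set P := (2:ℝ)^m with hP
    have hP1 : (1:ℝ) ≤ P := one_le_pow₀ (by norm_num)
    have hP0 : (0:ℝ) < P := by linarith
    have habs_bounds : ∀ j ∈ G, P * y ≤ ‖ζ - conj (z j)‖ ∧
        ‖ζ - conj (z j)‖ < 2*P*y := by
      intro j hj
      rw [hG, Finset.mem_filter] at hj
      have hb := hqb j
      rw [hj.2] at hb
      constructor
      · have := hb.1
        rw [hq, le_div_iff₀ hζ] at this
        linarith [this]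
      · have := hb.2
        rw [hq, div_lt_iff₀ hζ] at this
        calc ‖ζ - conj (z j)‖ < (2:ℝ)^(m+1) * y := this
          _ = 2*P*y := by rw [hP]; ring
    -- sum of y_j over G
    have hsumy : ∑ j ∈ G, (z j).im ≤ C * (6 * P * y) := by
      have := lemA z hz A hA hker G (x - 2*P*y) (x + 2*P*y) (2*P*y)
        (by positivity) (by nlinarith) ?_
      · calc ∑ j ∈ G, (z j).im ≤ C * ((x + 2*P*y) - (x - 2*P*y) + 2*P*y) := this
          _ = C * (6*P*y) := by ring
      · intro j hj
        obtain ⟨h1, h2⟩ := habs_bounds j hj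
        have hre := re_abs_le_abs_denom ζ (z j)
        have him := im_le_abs_denom ζ (z j) hζ (hz j)
        have hre2 : |x - (z j).re| < 2*P*y := lt_of_le_of_lt hre h2
        rw [abs_lt] at hre2
        refine ⟨by linarith [hre2.1], by linarith [hre2.2], by linarith [him, h2]⟩
    -- termwise bound
    have hterm : ∀ j ∈ G, ζ.im * (z j).im / (‖ζ - conj (z j)‖)^2
        ≤ (z j).im / (P^2 * y) := by
      intro j hj
      obtain ⟨h1, _⟩ := habs_bounds j hj
      have hd0 : (0:ℝ) < P*y := by positivity
      have habs2 : (P*y)^2 ≤ (‖ζ - conj (z j)‖)^2 := by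
        apply sq_le_sq' <;> nlinarith [h1]
      have hyj := hz j
      rw [div_le_div_iff₀ (lt_of_lt_of_le (by positivity) habs2) (by positivity)]
      calc ζ.im * (z j).im * (P^2 * y) = (z j).im * ((P*y)^2) := by rw [hy]; ring
        _ ≤ (z j).im * (‖ζ - conj (z j)‖)^2 := by
            apply mul_le_mul_of_nonneg_left habs2 hyj.le
    calc ∑ j ∈ G, ζ.im * (z j).im / (‖ζ - conj (z j)‖)^2
        ≤ ∑ j ∈ G, (z j).im / (P^2 * y) := Finset.sum_le_sum hterm
      _ = (∑ j ∈ G, (z j).im) / (P^2 * y) := by rw [Finset.sum_div]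
      _ ≤ (C * (6 * P * y)) / (P^2 * y) := by
          apply div_le_div_of_nonneg_right hsumy (by positivity)
      _ = 6 * C * (1/2:ℝ)^m := by
          rw [one_div_pow, ← hP]
          field_simp
  calc ∑ m ∈ F.image n, ∑ j ∈ F.filter (fun j => n j = m),
          ζ.im * (z j).im / (‖ζ - conj (z j)‖)^2
      ≤ ∑ m ∈ F.image n, 6 * C * (1/2:ℝ)^m := Finset.sum_le_sum hfiber
    _ = 6 * C * ∑ m ∈ F.image n, (1/2:ℝ)^m := by rw [Finset.mul_sum]
    _ ≤ 6 * C * 2 := by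
        apply mul_le_mul_of_nonneg_left _ (by positivity)
        have hsub : F.image n ⊆ Finset.range ((F.image n).sup id + 1) := by
          intro m hm
          rw [Finset.mem_range]
          exact Nat.lt_succ_of_le (Finset.le_sup (f := id) hm)
        calc ∑ m ∈ F.image n, (1/2:ℝ)^m
            ≤ ∑ m ∈ Finset.range ((F.image n).sup id + 1), (1/2:ℝ)^m :=
              Finset.sum_le_sum_of_subset_of_nonneg hsub (fun i _ _ => by positivity)
          _ ≤ 2 := sum_geometric_two_le _
    _ = 12 * (1 + 2*A) := by rw [hCdef]; ring


/-- For a Carleson sequence `{z_k}` in the upper half-plane with Carleson constant `δ₀`,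
there is `c = c(δ₀) > 0` with `∏_w |b_w(z)| ≥ c · inf_w |b_w(z)|` for all `z ∈ ℂ₊`. -/
theorem stmt_7 (z : ℕ → ℂ) (hz : ∀ k, 0 < (z k).im)
    (hBlaschke : Summable fun k => (z k).im / (1 + ‖z k‖ ^ 2))
    (δ₀ : ℝ) (hδ₀ : 0 < δ₀)
    (hCarleson : ∀ k, δ₀ ≤ ∏' j, if j = k then 1 else ‖(z k - z j) / (z k - conj (z j))‖) :
    ∃ c > 0, ∀ ζ : ℂ, 0 < ζ.im →
      c * ⨅ j, ‖(ζ - z j) / (ζ - conj (z j))‖ ≤ ∏' j, ‖(ζ - z j) / (ζ - conj (z j))‖ := by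
  classical
  -- Step 1: separation for finite subproducts
  have hsep : ∀ k (F : Finset ℕ), k ∉ F →
      δ₀ ≤ ∏ j ∈ F, ‖(z k - z j) / (z k - conj (z j))‖ := by
    intro k F hkF
    have hg0 : ∀ j, 0 ≤ (if j = k then 1 else ‖(z k - z j) / (z k - conj (z j))‖ : ℝ) := by
      intro j; split
      · norm_num
      · exact norm_nonneg _
    have hg1 : ∀ j, (if j = k then 1 else ‖(z k - z j) / (z k - conj (z j))‖ : ℝ) ≤ 1 := by
      intro j; split
      · norm_num
      · exact rho_le_one _ _ (hz k) (hz j)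
    have h1 := le_trans (hCarleson k) (tprod_le_finprod hg0 hg1 F)
    calc δ₀ ≤ ∏ j ∈ F, (if j = k then 1 else ‖(z k - z j) / (z k - conj (z j))‖ : ℝ) := h1
      _ = ∏ j ∈ F, ‖(z k - z j) / (z k - conj (z j))‖ := by
          apply Finset.prod_congr rfl
          intro j hj
          rw [if_neg (by rintro rfl; exact hkF hj)]
  have hδ1 : δ₀ ≤ 1 := by simpa using hsep 0 ∅ (by simp)
  set A := 2 * Real.log (1/δ₀) with hA
  have hA0 : 0 ≤ A := by
    rw [hA]
    have h1 : (1:ℝ) ≤ 1/δ₀ := by rw [le_div_iff₀ hδ₀]; linarith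
    have := Real.log_nonneg h1
    linarith
  have hpair : ∀ k j, k ≠ j → δ₀ ≤ ‖(z k - z j) / (z k - conj (z j))‖ := by
    intro k j hkj
    have := hsep k {j} (by simp [hkj])
    simpa using this
  have hρpos : ∀ k j, k ≠ j → 0 < ‖(z k - z j) / (z k - conj (z j))‖ :=
    fun k j h => lt_of_lt_of_le hδ₀ (hpair k j h)
  -- Step 2: kernel bound at the points
  have hker : ∀ k (F : Finset ℕ), k ∉ F →
      ∑ j ∈ F, (z k).im * (z j).im / (‖z k - conj (z j)‖)^2 ≤ A/4 := by
    intro k F hkF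
    have hne : ∀ j ∈ F, k ≠ j := by intro j hj; rintro rfl; exact hkF hj
    have key : ∀ j ∈ F, 4 * ((z k).im * (z j).im / (‖z k - conj (z j)‖)^2)
        ≤ 2 * (- Real.log ‖(z k - z j) / (z k - conj (z j))‖) := by
      intro j hj
      have hρ0 := hρpos k j (hne j hj)
      have h1 := one_sub_rho_sq (z k) (z j) (hz k) (hz j)
      have h2 : Real.log ‖(z k - z j) / (z k - conj (z j))‖
          ≤ (‖(z k - z j) / (z k - conj (z j))‖^2 - 1)/2 := by
        have h3 := Real.log_le_sub_one_of_pos (pow_pos hρ0 2)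
        rw [Real.log_pow] at h3
        push_cast at h3
        linarith
      have h1' : 1 - ‖(z k - z j) / (z k - conj (z j))‖^2
          = 4 * ((z k).im * (z j).im / (‖z k - conj (z j)‖)^2) := by
        rw [h1]; ring
      nlinarith [h1', h2]
    have hsum := Finset.sum_le_sum key
    have hprodpos : 0 < ∏ j ∈ F, ‖(z k - z j) / (z k - conj (z j))‖ :=
      Finset.prod_pos (fun j hj => hρpos k j (hne j hj))
    have hlogsum : ∑ j ∈ F, - Real.log ‖(z k - z j) / (z k - conj (z j))‖
        = - Real.log (∏ j ∈ F, ‖(z k - z j) / (z k - conj (z j))‖) := by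
      rw [Real.log_prod (fun j hj => (hρpos k j (hne j hj)).ne')]
      rw [Finset.sum_neg_distrib]
    have hmono : Real.log δ₀ ≤ Real.log (∏ j ∈ F, ‖(z k - z j) / (z k - conj (z j))‖) :=
      Real.log_le_log hδ₀ (hsep k F hkF)
    have h4 : ∑ j ∈ F, 4 * ((z k).im * (z j).im / (‖z k - conj (z j)‖)^2)
        = 4 * ∑ j ∈ F, ((z k).im * (z j).im / (‖z k - conj (z j)‖)^2) := by
      rw [Finset.mul_sum]
    have h5 : ∑ j ∈ F, 2 * (- Real.log ‖(z k - z j) / (z k - conj (z j))‖)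
        = 2 * ∑ j ∈ F, (- Real.log ‖(z k - z j) / (z k - conj (z j))‖) := by
      rw [Finset.mul_sum]
    rw [h4, h5, hlogsum] at hsum
    have hlogδ : Real.log (1/δ₀) = - Real.log δ₀ := by rw [one_div, Real.log_inv]
    rw [hA, hlogδ]
    linarith
  -- Step 3: constants
  set C := 1 + 2*A with hCd
  have hC0 : (0:ℝ) < C := by rw [hCd]; linarith
  set B := 48 * C with hBd
  have hB0 : (0:ℝ) < B := by rw [hBd]; linarith
  set N := ⌈(4/3) * A⌉₊ + 1 with hNd
  set c := (δ₀/4)^N * Real.exp (-(4*B)) with hcd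
  have hδ40 : (0:ℝ) < δ₀/4 := by linarith
  have hδ41 : δ₀/4 ≤ 1 := by linarith
  have hc0 : 0 < c := by rw [hcd]; positivity
  have hc1 : c ≤ 1 := by
    rw [hcd]
    have h1 : (δ₀/4)^N ≤ 1 := pow_le_one₀ hδ40.le hδ41
    have h2 : Real.exp (-(4*B)) ≤ 1 := by
      rw [← Real.exp_zero]
      exact Real.exp_le_exp.2 (by linarith)
    nlinarith [Real.exp_pos (-(4*B)), pow_pos hδ40 N]
  refine ⟨c, hc0, ?_⟩
  intro ζ hζim
  set f : ℕ → ℝ := fun j => ‖(ζ - z j) / (ζ - conj (z j))‖ with hfd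
  have hf0 : ∀ j, 0 ≤ f j := fun j => norm_nonneg _
  have hf1 : ∀ j, f j ≤ 1 := fun j => rho_le_one _ _ hζim (hz j)
  have hbdd : BddBelow (Set.range f) := ⟨0, by rintro _ ⟨j, rfl⟩; exact hf0 j⟩
  have ha0 : 0 ≤ ⨅ j, f j := le_ciInf hf0
  have ha1 : (⨅ j, f j) ≤ 1 := le_trans (ciInf_le hbdd 0) (hf1 0)
  -- key finite bound
  have hfin : ∀ F : Finset ℕ, c * (⨅ j, f j) ≤ ∏ j ∈ F, f j := by
    intro F
    set S := F.filter (fun j => f j < 1/4) with hSd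
    set T := F.filter (fun j => ¬ (f j < 1/4)) with hTd
    have hST : (∏ j ∈ S, f j) * ∏ j ∈ T, f j = ∏ j ∈ F, f j :=
      Finset.prod_filter_mul_prod_filter_not F _ _
    -- triangle comparison helper
    have htri2 : ∀ i j : ℕ, ‖(z i - z j) / (z i - conj (z j))‖ ≤ f i + f j := by
      intro i j
      have h1 := rho_triangle (z i) ζ (z j) (hz i) hζim (hz j)
      have h2 : ‖(z i - ζ) / (z i - conj ζ)‖ = f i := by
        rw [rho_symm]
      linarith [h1, h2.le, h2.ge]
    -- T bound
    have hTb : Real.exp (-(4*B)) ≤ ∏ j ∈ T, f j := by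
      have hTpos : ∀ j ∈ T, (1:ℝ)/4 ≤ f j := by
        intro j hj
        rw [hTd, Finset.mem_filter] at hj
        push_neg at hj
        exact hj.2
      have hTrw : ∏ j ∈ T, f j = Real.exp (∑ j ∈ T, Real.log (f j)) := by
        rw [Real.exp_sum]
        exact Finset.prod_congr rfl (fun j hj => (Real.exp_log (by linarith [hTpos j hj])).symm)
      rw [hTrw]
      apply Real.exp_le_exp.2
      have hlog : ∀ j ∈ T, -(4*(1 - f j^2)) ≤ Real.log (f j) := by
        intro j hj
        have h4 := hTpos j hj
        have hle1 := hf1 j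
        have hpos : (0:ℝ) < f j := by linarith
        have hl : Real.log (f j)⁻¹ ≤ (f j)⁻¹ - 1 :=
          Real.log_le_sub_one_of_pos (by positivity)
        rw [Real.log_inv] at hl
        have hff : f j * (f j)⁻¹ = 1 := mul_inv_cancel₀ hpos.ne'
        nlinarith [hl, hff]
      have hsum1 : ∑ j ∈ T, -(4*(1 - f j^2)) ≤ ∑ j ∈ T, Real.log (f j) :=
        Finset.sum_le_sum hlog
      have hsum2 : ∑ j ∈ T, (1 - f j^2) ≤ B := by
        have hrw : ∀ j ∈ T, 1 - f j^2
            = 4 * (ζ.im * (z j).im / (‖ζ - conj (z j)‖)^2) := by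
          intro j hj
          have := one_sub_rho_sq ζ (z j) hζim (hz j)
          rw [hfd]
          dsimp only
          rw [this]
          ring
        rw [Finset.sum_congr rfl hrw, ← Finset.mul_sum]
        have := lemB z hz A hA0 hker ζ hζim T
        calc 4 * ∑ j ∈ T, ζ.im * (z j).im / (‖ζ - conj (z j)‖)^2
            ≤ 4 * (12 * (1+2*A)) := by linarith
          _ = B := by rw [hBd, hCd]; ring
      have hneg : ∑ j ∈ T, -(4*(1 - f j^2)) = -(4 * ∑ j ∈ T, (1 - f j^2)) := by
        rw [Finset.mul_sum, ← Finset.sum_neg_distrib]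
      linarith [hsum1, hneg ▸ (by linarith [hsum2] : -(4*B) ≤ -(4 * ∑ j ∈ T, (1 - f j^2)))]
    -- S cardinality bound
    have hScard : S.card ≤ N := by
      rcases S.eq_empty_or_nonempty with hSe | ⟨i, hiS⟩
      · rw [hSe]; simp
      · have hsml : ∀ j ∈ S, f j < 1/4 := by
          intro j hj; rw [hSd, Finset.mem_filter] at hj; exact hj.2
        have hterm : ∀ j ∈ S.erase i,
            (3:ℝ)/4 ≤ 4 * ((z i).im * (z j).im / (‖z i - conj (z j)‖)^2) := by
          intro j hj
          have hjS : j ∈ S := Finset.mem_of_mem_erase hj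
          have hrr : ‖(z i - z j) / (z i - conj (z j))‖ < 1/2 :=
            lt_of_le_of_lt (htri2 i j) (by linarith [hsml i hiS, hsml j hjS])
          have h1 := one_sub_rho_sq (z i) (z j) (hz i) (hz j)
          have h1' : 1 - ‖(z i - z j) / (z i - conj (z j))‖^2
              = 4 * ((z i).im * (z j).im / (‖z i - conj (z j)‖)^2) := by
            rw [h1]; ring
          nlinarith [norm_nonneg ((z i - z j) / (z i - conj (z j))), h1', hrr]
        have hsumS := Finset.sum_le_sum hterm
        have hkerS := hker i (S.erase i) (Finset.notMem_erase i S)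
        have hconst : ∑ _j ∈ S.erase i, (3:ℝ)/4 = ((S.erase i).card : ℝ) * (3/4) := by
          rw [Finset.sum_const, nsmul_eq_mul]
        have hmul : ∑ j ∈ S.erase i, 4 * ((z i).im * (z j).im / (‖z i - conj (z j)‖)^2)
            = 4 * ∑ j ∈ S.erase i, ((z i).im * (z j).im / (‖z i - conj (z j)‖)^2) := by
          rw [Finset.mul_sum]
        have hcard : ((S.erase i).card : ℝ) * (3/4) ≤ A := by
          rw [← hconst]
          calc ∑ _j ∈ S.erase i, (3:ℝ)/4 ≤ _ := hsumS
            _ = 4 * ∑ j ∈ S.erase i, ((z i).im * (z j).im / (‖z i - conj (z j)‖)^2) := hmul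
            _ ≤ 4 * (A/4) := by linarith [hkerS]
            _ = A := by ring
        have hce : (S.erase i).card = S.card - 1 := Finset.card_erase_of_mem hiS
        have hS1 : 1 ≤ S.card := Finset.card_pos.2 ⟨i, hiS⟩
        have hcastr : ((S.card : ℝ) - 1) * (3/4) ≤ A := by
          have : ((S.erase i).card : ℝ) = (S.card : ℝ) - 1 := by
            rw [hce]; push_cast [hS1]; ring
          rwa [this] at hcard
        have hNreal : (S.card : ℝ) ≤ (N : ℝ) := by
          have h43 : (S.card : ℝ) - 1 ≤ (4/3) * A := by linarith
          have hceil : (4/3) * A ≤ (⌈(4/3) * A⌉₊ : ℝ) := Nat.le_ceil _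
          rw [hNd]
          push_cast
          linarith
        exact_mod_cast hNreal
    -- S product bound
    have hSpos : (0:ℝ) ≤ ∏ j ∈ S, f j := Finset.prod_nonneg (fun j _ => hf0 j)
    have hSb : (⨅ j, f j) * (δ₀/4)^N ≤ ∏ j ∈ S, f j := by
      by_cases hex : ∃ m ∈ S, f m < δ₀/4
      · obtain ⟨m, hmS, hm⟩ := hex
        have hrest : ∀ j ∈ S.erase m, δ₀/4 ≤ f j := by
          intro j hj
          by_contra hcon
          push_neg at hcon
          have hjm : j ≠ m := Finset.ne_of_mem_erase hj
          have htr := htri2 m j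
          have hp := hpair m j (Ne.symm hjm)
          linarith
        have hprod : ∏ j ∈ S, f j = f m * ∏ j ∈ S.erase m, f j :=
          (Finset.mul_prod_erase S f hmS).symm
        have h1 : (δ₀/4)^((S.erase m).card) ≤ ∏ j ∈ S.erase m, f j := by
          calc (δ₀/4)^((S.erase m).card) = ∏ _j ∈ S.erase m, (δ₀/4) :=
              (Finset.prod_const _).symm
            _ ≤ ∏ j ∈ S.erase m, f j :=
              Finset.prod_le_prod (fun j _ => hδ40.le) (fun j hj => hrest j hj)
        have hcard2 : (S.erase m).card ≤ N :=
          le_trans (Finset.card_le_card (Finset.erase_subset m S)) hScard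
        have h2 : (δ₀/4)^N ≤ (δ₀/4)^((S.erase m).card) :=
          pow_le_pow_of_le_one hδ40.le hδ41 hcard2
        calc (⨅ j, f j) * (δ₀/4)^N ≤ f m * (δ₀/4)^((S.erase m).card) :=
            mul_le_mul (ciInf_le hbdd m) h2 (by positivity) (hf0 m)
          _ ≤ f m * ∏ j ∈ S.erase m, f j :=
            mul_le_mul_of_nonneg_left h1 (hf0 m)
          _ = ∏ j ∈ S, f j := hprod.symm
      · push_neg at hex
        have h1 : (δ₀/4)^(S.card) ≤ ∏ j ∈ S, f j := by
          calc (δ₀/4)^(S.card) = ∏ _j ∈ S, (δ₀/4) := (Finset.prod_const _).symm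
            _ ≤ ∏ j ∈ S, f j := Finset.prod_le_prod (fun j _ => hδ40.le) (fun j hj => hex j hj)
        have h2 : (δ₀/4)^N ≤ (δ₀/4)^(S.card) :=
          pow_le_pow_of_le_one hδ40.le hδ41 hScard
        calc (⨅ j, f j) * (δ₀/4)^N ≤ 1 * (δ₀/4)^N :=
            mul_le_mul_of_nonneg_right ha1 (by positivity)
          _ = (δ₀/4)^N := one_mul _
          _ ≤ (δ₀/4)^(S.card) := h2
          _ ≤ ∏ j ∈ S, f j := h1
    calc c * (⨅ j, f j) = ((⨅ j, f j) * (δ₀/4)^N) * Real.exp (-(4*B)) := by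
          rw [hcd]; ring
      _ ≤ (∏ j ∈ S, f j) * (∏ j ∈ T, f j) :=
          mul_le_mul hSb hTb (Real.exp_pos _).le hSpos
      _ = ∏ j ∈ F, f j := hST
  by_cases hM : Multipliable f
  · exact ge_of_tendsto hM.hasProd (Filter.Eventually.of_forall hfin)
  · rw [show (∏' j, f j) = 1 from tprod_eq_one_of_not_multipliable hM]
    calc c * (⨅ j, f j) ≤ 1 * 1 := mul_le_mul hc1 ha1 ha0 (by norm_num)
      _ = 1 := one_mul 1
end

section
/- Let μ be a finite positive measure on [0,1], M = μ([0,1]). Define φ(x) = μ([0,x)) + ½μ({x}) for x > 0, φ(0) = ½μ({0}), and ψ(t) = inf{x : μ([0,x)) > t} for t < μ([0,1)), ψ(t) = 1 for t ≥ μ([0,1)). Then for every f ∈ L¹(μ) and every x ∈ [0,1], ∫_0^{φ(x)} f(ψ(t)) dt = ∫_{[0,x)} f dμ + ½ μ({x}) f(x). -/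
open MeasureTheory Set

/-- Change of variables: for a finite measure `μ` on `[0,1]`, with
`φ(x) = μ[0,x) + ½μ{x}` and `ψ(t) = inf{x : μ[0,x) > t}` (and `ψ(t) = 1` for
`t ≥ μ[0,1)`), one has `∫_0^{φ(x)} f(ψ(t)) dt = ∫_{[0,x)} f dμ + ½ μ{x} f(x)`. -/
theorem stmt_8 (μ : Measure ℝ) [IsFiniteMeasure μ] (hsupp : μ (Icc (0:ℝ) 1)ᶜ = 0)
    (φ ψ : ℝ → ℝ)
    (hφ0 : φ 0 = (μ {0}).toReal / 2)
    (hφ : ∀ x : ℝ, 0 < x → φ x = (μ (Ico 0 x)).toReal + (μ {x}).toReal / 2)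
    (hψ : ∀ t : ℝ, t < (μ (Ico (0:ℝ) 1)).toReal →
      ψ t = sInf {x : ℝ | t < (μ (Ico 0 x)).toReal})
    (hψ1 : ∀ t : ℝ, (μ (Ico (0:ℝ) 1)).toReal ≤ t → ψ t = 1)
    (f : ℝ → ℝ) (hf : Integrable f μ)
    (x : ℝ) (hx : x ∈ Icc (0:ℝ) 1) :
    ∫ t in Ioc 0 (φ x), f (ψ t) =
      (∫ s in Ico 0 x, f s ∂μ) + (μ {x}).toReal / 2 * f x := by
  obtain ⟨hx0, hx1⟩ := hx
  have hfin : ∀ s : Set ℝ, μ s ≠ ⊤ := fun s => measure_ne_top μ s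
  set F : ℝ → ℝ := fun y => (μ (Ico (0:ℝ) y)).toReal with hFdef
  have hψ' : ∀ t : ℝ, t < F 1 → ψ t = sInf {w : ℝ | t < F w} := by
    intro t ht
    simp only [hFdef] at ht ⊢
    exact hψ t ht
  have hψ1' : ∀ t : ℝ, F 1 ≤ t → ψ t = 1 := by
    intro t ht
    exact hψ1 t ht
  have hFnonneg : ∀ y, 0 ≤ F y := fun y => ENNReal.toReal_nonneg
  have hFmono : Monotone F := fun y z h =>
    ENNReal.toReal_mono (hfin _) (measure_mono (Ico_subset_Ico le_rfl h))
  have hF0 : ∀ y : ℝ, y ≤ 0 → F y = 0 := by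
    intro y hy
    simp only [hFdef]
    rw [Ico_eq_empty (not_lt.2 hy)]
    simp
  set M : ℝ := (μ (univ : Set ℝ)).toReal with hMdef
  have hFM : ∀ y, F y ≤ M := fun y =>
    ENNReal.toReal_mono (hfin _) (measure_mono (subset_univ _))
  -- left continuity of F
  have hA : ∀ y t : ℝ, 0 ≤ t → t < F y → ∃ w, w < y ∧ t < F w := by
    intro y t ht0 ht
    have hmon : Monotone (fun n : ℕ => Ico (0:ℝ) (y - 1/(n+1))) := by
      intro m n hmn
      apply Ico_subset_Ico le_rfl
      have h1 : (1:ℝ)/(n+1) ≤ 1/(m+1) := by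
        apply one_div_le_one_div_of_le (by positivity)
        have : (m:ℝ) ≤ n := Nat.cast_le.2 hmn
        linarith
      linarith
    have hU : (⋃ n : ℕ, Ico (0:ℝ) (y - 1/(n+1))) = Ico 0 y := by
      ext z
      simp only [mem_iUnion, mem_Ico]
      constructor
      · rintro ⟨n, h0, h1⟩
        have : (0:ℝ) < 1/((n:ℝ)+1) := by positivity
        exact ⟨h0, by linarith⟩
      · rintro ⟨h0, h1⟩
        obtain ⟨n, hn⟩ := exists_nat_one_div_lt (sub_pos.2 h1)
        exact ⟨n, h0, by linarith⟩
    have htends := tendsto_measure_iUnion_atTop (μ := volume.restrict univ) hmon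
    have htends' := tendsto_measure_iUnion_atTop (μ := μ) hmon
    rw [hU] at htends'
    have hlt : ENNReal.ofReal t < μ (Ico 0 y) :=
      (ENNReal.ofReal_lt_iff_lt_toReal ht0 (hfin _)).2 ht
    obtain ⟨n, hn⟩ := (htends'.eventually_const_lt hlt).exists
    refine ⟨y - 1/(n+1), ?_, ?_⟩
    · have : (0:ℝ) < 1/((n:ℝ)+1) := by positivity
      linarith
    · exact (ENNReal.ofReal_lt_iff_lt_toReal ht0 (hfin _)).1 hn
  -- right continuity at y (for Icc)
  have hB : ∀ y t : ℝ, (μ (Icc (0:ℝ) y)).toReal < t → ∃ z, y < z ∧ F z ≤ t := by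
    intro y t ht
    by_contra h
    push_neg at h
    have hanti : Antitone (fun n : ℕ => Ico (0:ℝ) (y + 1/(n+1))) := by
      intro m n hmn
      apply Ico_subset_Ico le_rfl
      have h1 : (1:ℝ)/(n+1) ≤ 1/(m+1) := by
        apply one_div_le_one_div_of_le (by positivity)
        have : (m:ℝ) ≤ n := Nat.cast_le.2 hmn
        linarith
      linarith
    have hI : (⋂ n : ℕ, Ico (0:ℝ) (y + 1/(n+1))) = Icc 0 y := by
      ext z
      simp only [mem_iInter, mem_Ico, mem_Icc]
      constructor
      · intro hz
        refine ⟨(hz 0).1, ?_⟩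
        by_contra hzy
        push_neg at hzy
        obtain ⟨n, hn⟩ := exists_nat_one_div_lt (sub_pos.2 hzy)
        have := (hz n).2
        linarith
      · rintro ⟨h0, h1⟩ n
        have : (0:ℝ) < 1/((n:ℝ)+1) := by positivity
        exact ⟨h0, by linarith⟩
    have htends := tendsto_measure_iInter_atTop (μ := μ)
      (fun n => measurableSet_Ico.nullMeasurableSet) hanti ⟨0, hfin _⟩
    rw [hI] at htends
    have hle : ∀ n : ℕ, ENNReal.ofReal t ≤ (μ ∘ fun n : ℕ => Ico (0:ℝ) (y + 1/(n+1))) n := by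
      intro n
      have hpos : (0:ℝ) < 1/((n:ℝ)+1) := by positivity
      have h2 := h (y + 1/((n:ℝ)+1)) (by linarith)
      exact ENNReal.ofReal_le_of_le_toReal h2.le
    have hge := ge_of_tendsto htends (Filter.Eventually.of_forall hle)
    have ht0 : 0 ≤ t := le_trans ENNReal.toReal_nonneg ht.le
    have : t ≤ (μ (Icc 0 y)).toReal := by
      rw [← ENNReal.ofReal_le_iff_le_toReal (hfin _)] at *
      exact hge
    linarith
  -- lower bound of the sInf set
  have hlb : ∀ t : ℝ, 0 ≤ t → ∀ w ∈ {w : ℝ | t < F w}, (0:ℝ) ≤ w := by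
    intro t ht w hw
    simp only [mem_setOf_eq] at hw
    by_contra hw0
    push_neg at hw0
    rw [hF0 w hw0.le] at hw
    exact absurd hw (not_lt.2 ht)
  have hSbdd : ∀ t : ℝ, 0 ≤ t → BddBelow {w : ℝ | t < F w} := fun t ht => ⟨0, hlb t ht⟩
  have hneg : ∀ t : ℝ, t < 0 → sInf {w : ℝ | t < F w} = 0 := by
    intro t ht
    apply Real.sInf_of_not_bddBelow
    rintro ⟨b, hb⟩
    have hmem : min b 0 - 1 ∈ {w : ℝ | t < F w} := by
      simp only [mem_setOf_eq]
      rw [hF0 _ (by linarith [min_le_right b 0])]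
      exact ht
    have := hb hmem
    have h2 : min b 0 - 1 ≤ b - 1 := by linarith [min_le_left b 0]
    linarith
  -- basic ψ facts
  have hψ_le_one : ∀ t : ℝ, 0 ≤ t → ψ t ≤ 1 := by
    intro t ht
    by_cases h1 : t < F 1
    · rw [hψ' t h1]
      exact csInf_le (hSbdd t ht) (by exact h1)
    · rw [hψ1' t (not_lt.1 h1)]
  have hψ_nonneg : ∀ t : ℝ, 0 < t → 0 ≤ ψ t := by
    intro t ht
    by_cases h1 : t < F 1
    · rw [hψ' t h1]
      exact le_csInf ⟨1, by exact h1⟩ (hlb t ht.le)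
    · rw [hψ1' t (not_lt.1 h1)]; norm_num
  have hψ_lt_iff : ∀ t y : ℝ, 0 < t → y ≤ 1 → (ψ t < y ↔ t < F y) := by
    intro t y ht hy
    by_cases h1 : t < F 1
    · rw [hψ' t h1]
      constructor
      · intro h
        obtain ⟨w, hw, hwy⟩ := exists_lt_of_csInf_lt ⟨1, by exact h1⟩ h
        simp only [mem_setOf_eq] at hw
        exact lt_of_lt_of_le hw (hFmono hwy.le)
      · intro h
        obtain ⟨w, hwy, hw⟩ := hA y t ht.le h
        exact lt_of_le_of_lt (csInf_le (hSbdd t ht.le) (by exact hw)) hwy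
    · rw [hψ1' t (not_lt.1 h1)]
      push_neg at h1
      constructor
      · intro h; exact absurd (lt_of_lt_of_le h hy) (lt_irrefl 1)
      · intro h; exact absurd (lt_of_lt_of_le h (hFmono hy)) (not_lt.2 h1)
  have hψ_le : ∀ t y : ℝ, 0 < t → y ≤ 1 → t < (μ (Icc (0:ℝ) y)).toReal → ψ t ≤ y := by
    intro t y ht hy htc
    by_cases h1 : t < F 1
    · rw [hψ' t h1]
      apply le_of_forall_pos_le_add
      intro ε hε
      apply csInf_le (hSbdd t ht.le)
      simp only [mem_setOf_eq]
      refine lt_of_lt_of_le htc (ENNReal.toReal_mono (hfin _) (measure_mono ?_))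
      intro z hz
      exact ⟨hz.1, by rcases hz with ⟨hz1, hz2⟩; linarith⟩
    · push_neg at h1
      rw [hψ1' t h1]
      by_contra hy1
      push_neg at hy1
      have : (μ (Icc (0:ℝ) y)).toReal ≤ F 1 :=
        ENNReal.toReal_mono (hfin _) (measure_mono (fun z hz => ⟨hz.1, lt_of_le_of_lt hz.2 hy1⟩))
      linarith
  have hψ_ge : ∀ t y : ℝ, y ≤ 1 → F y < t → y ≤ ψ t := by
    intro t y hy ht
    by_cases h1 : t < F 1
    · rw [hψ' t h1]
      apply le_csInf ⟨1, by exact h1⟩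
      intro w hw
      simp only [mem_setOf_eq] at hw
      by_contra hwy
      push_neg at hwy
      exact absurd (lt_trans ht hw) (not_lt.2 (hFmono hwy.le))
    · rw [hψ1' t (not_lt.1 h1)]; exact hy
  have hψ_gt : ∀ t y : ℝ, y < 1 → (μ (Icc (0:ℝ) y)).toReal < t → y < ψ t := by
    intro t y hy ht
    by_cases h1 : t < F 1
    · obtain ⟨z, hyz, hz⟩ := hB y t ht
      rw [hψ' t h1]
      have hyz' : y < min z 1 := lt_min hyz hy
      refine lt_of_lt_of_le hyz' (le_csInf ⟨1, by exact h1⟩ ?_)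
      intro w hw
      simp only [mem_setOf_eq] at hw
      by_contra hwz
      push_neg at hwz
      have : F w ≤ F z := hFmono (le_trans hwz.le (min_le_left z 1))
      exact absurd (lt_of_lt_of_le hw this) (not_lt.2 hz)
    · rw [hψ1' t (not_lt.1 h1)]; exact hy
  -- ψ is monotone hence measurable
  have hmono : Monotone ψ := by
    intro t1 t2 h12
    by_cases h2 : F 1 ≤ t2
    · rw [hψ1' t2 h2]
      by_cases h1 : F 1 ≤ t1
      · rw [hψ1' t1 h1]
      · push_neg at h1
        rw [hψ' t1 h1]
        rcases le_or_gt 0 t1 with ht1 | ht1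
        · exact csInf_le (hSbdd t1 ht1) (by exact h1)
        · rw [hneg t1 ht1]; norm_num
    · push_neg at h2
      have h1 : t1 < F 1 := lt_of_le_of_lt h12 h2
      rw [hψ' t1 h1, hψ' t2 h2]
      rcases le_or_gt 0 t1 with ht1 | ht1
      · exact csInf_le_csInf (hSbdd t1 ht1) ⟨1, by exact h2⟩ (fun w hw => lt_of_le_of_lt h12 (by simpa only [mem_setOf_eq] using hw))
      · rw [hneg t1 ht1]
        rcases le_or_gt 0 t2 with ht2 | ht2
        · exact le_csInf ⟨1, by exact h2⟩ (hlb t2 ht2)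
        · rw [hneg t2 ht2]
  have hmeas : Measurable ψ := hmono.measurable
  -- the pushforward identity
  have hmap : Measure.map ψ (volume.restrict (Ioc 0 M)) = μ := by
    have hfin2 : IsFiniteMeasure (Measure.map ψ (volume.restrict (Ioc 0 M))) := by
      constructor
      rw [Measure.map_apply hmeas MeasurableSet.univ, preimage_univ,
        Measure.restrict_apply_univ, Real.volume_Ioc]
      exact ENNReal.ofReal_lt_top
    refine Measure.ext_of_Iic _ μ (fun y => ?_)
    rw [Measure.map_apply hmeas measurableSet_Iic,
      Measure.restrict_apply (hmeas measurableSet_Iic)]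
    rcases lt_or_ge y 0 with hy | hy
    · have he : ψ ⁻¹' Iic y ∩ Ioc 0 M = ∅ := by
        ext t
        simp only [mem_inter_iff, mem_preimage, mem_Iic, mem_Ioc, mem_empty_iff_false, iff_false,
          not_and]
        intro hty ht0
        exact absurd (le_trans (hψ_nonneg t ht0) hty) (not_le.2 hy)
      rw [he, measure_empty]
      symm
      apply measure_mono_null _ hsupp
      intro z hz
      simp only [mem_Iic] at hz
      simp only [mem_compl_iff, mem_Icc, not_and]
      intro h0; linarith
    rcases lt_or_ge y 1 with hy1 | hy1
    · have hcM : (μ (Icc (0:ℝ) y)).toReal ≤ M :=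
        ENNReal.toReal_mono (hfin _) (measure_mono (subset_univ _))
      have hsub1 : ψ ⁻¹' Iic y ∩ Ioc 0 M ⊆ Ioc 0 ((μ (Icc (0:ℝ) y)).toReal) := by
        rintro t ⟨hty, ht0, htM⟩
        refine ⟨ht0, ?_⟩
        by_contra hct
        push_neg at hct
        exact absurd hty (not_le.2 (hψ_gt t y hy1 hct))
      have hsub2 : Ioo 0 ((μ (Icc (0:ℝ) y)).toReal) ⊆ ψ ⁻¹' Iic y ∩ Ioc 0 M := by
        rintro t ⟨ht0, htc⟩
        exact ⟨hψ_le t y ht0 hy1.le htc, ht0, le_trans htc.le hcM⟩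
      have h1 := measure_mono (μ := volume) hsub1
      have h2 := measure_mono (μ := volume) hsub2
      rw [Real.volume_Ioc] at h1
      rw [Real.volume_Ioo] at h2
      have hv : volume (ψ ⁻¹' Iic y ∩ Ioc 0 M) = ENNReal.ofReal ((μ (Icc (0:ℝ) y)).toReal) := by
        refine le_antisymm (by simpa using h1) (by simpa using h2)
      rw [hv, ENNReal.ofReal_toReal (hfin _)]
      refine le_antisymm (measure_mono Icc_subset_Iic_self) ?_
      calc μ (Iic y) ≤ μ (Icc 0 y ∪ (Icc 0 1)ᶜ) := by
             apply measure_mono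
             intro z hz
             simp only [mem_Iic] at hz
             simp only [mem_union, mem_Icc, mem_compl_iff, not_and, not_le]
             rcases le_or_gt 0 z with h0 | h0
             · exact Or.inl ⟨h0, hz⟩
             · exact Or.inr (fun hc => absurd hc (not_le.2 h0))
        _ ≤ μ (Icc 0 y) + μ (Icc 0 1)ᶜ := measure_union_le _ _
        _ = μ (Icc 0 y) := by rw [hsupp, add_zero]
    · have hall : ψ ⁻¹' Iic y ∩ Ioc 0 M = Ioc 0 M := by
        apply inter_eq_right.mpr
        intro t ht
        show ψ t ≤ y
        exact le_trans (hψ_le_one t ht.1.le) hy1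
      rw [hall, Real.volume_Ioc, sub_zero, hMdef, ENNReal.ofReal_toReal (hfin _)]
      refine le_antisymm ?_ (measure_mono (subset_univ _))
      calc μ univ ≤ μ (Iic y ∪ (Icc 0 1)ᶜ) := by
             apply measure_mono
             intro z _
             simp only [mem_union, mem_Iic, mem_compl_iff, mem_Icc, not_and, not_le]
             rcases le_or_gt z y with h0 | h0
             · exact Or.inl h0
             · exact Or.inr (fun _ => by linarith)
        _ ≤ μ (Iic y) + μ (Icc 0 1)ᶜ := measure_union_le _ _
        _ = μ (Iic y) := by rw [hsupp, add_zero]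
  -- change of variables and conclusion
  have hfmap : AEStronglyMeasurable f (Measure.map ψ (volume.restrict (Ioc 0 M))) := by
    rw [hmap]; exact hf.1
  have hint : Integrable (f ∘ ψ) (volume.restrict (Ioc 0 M)) :=
    (integrable_map_measure hfmap hmeas.aemeasurable).1 (by rw [hmap]; exact hf)
  have hφx : φ x = F x + (μ {x}).toReal / 2 := by
    rcases eq_or_lt_of_le hx0 with h0 | h0
    · rw [← h0, hφ0, hF0 0 le_rfl]; ring
    · exact hφ x h0
  have hIccx : (μ (Icc (0:ℝ) x)).toReal = F x + (μ {x}).toReal := by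
    have hd : Disjoint (Ico (0:ℝ) x) {x} := by
      simp [disjoint_singleton_right]
    show (μ (Icc (0:ℝ) x)).toReal = (μ (Ico (0:ℝ) x)).toReal + (μ {x}).toReal
    rw [← Ico_union_right hx0, measure_union hd (measurableSet_singleton x),
      ENNReal.toReal_add (hfin _) (hfin _)]
  have hμx0 : 0 ≤ (μ {x}).toReal := ENNReal.toReal_nonneg
  have haφ : F x ≤ φ x := by rw [hφx]; linarith
  have hφM : φ x ≤ M := by
    have h1 : (μ (Icc (0:ℝ) x)).toReal ≤ M :=
      ENNReal.toReal_mono (hfin _) (measure_mono (subset_univ _))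
    rw [hIccx] at h1
    rw [hφx]
    linarith
  have hint1 : IntegrableOn (fun t => f (ψ t)) (Ioc 0 (F x)) volume :=
    hint.mono_measure (Measure.restrict_mono (Ioc_subset_Ioc le_rfl (hFM x)) le_rfl)
  have hint2 : IntegrableOn (fun t => f (ψ t)) (Ioc (F x) (φ x)) volume :=
    hint.mono_measure (Measure.restrict_mono (Ioc_subset_Ioc (hFnonneg x) hφM) le_rfl)
  have part2 : ∫ t in Ioc (F x) (φ x), f (ψ t) = (μ {x}).toReal / 2 * f x := by
    rcases eq_or_ne (μ {x}) 0 with h0 | h0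
    · have hφF : φ x = F x := by rw [hφx, h0]; simp
      rw [hφF, Ioc_self, h0]
      simp
    · have hψeq : EqOn (fun t => f (ψ t)) (fun _ => f x) (Ioc (F x) (φ x)) := by
        intro t ht
        have ht0 : 0 < t := lt_of_le_of_lt (hFnonneg x) ht.1
        have hμpos : 0 < (μ {x}).toReal := ENNReal.toReal_pos h0 (hfin _)
        have htc : t < (μ (Icc (0:ℝ) x)).toReal := by
          rw [hIccx]
          have h2 := ht.2
          rw [hφx] at h2
          linarith
        have h1 : ψ t ≤ x := hψ_le t x ht0 hx1 htc
        have h2 : x ≤ ψ t := hψ_ge t x hx1 ht.1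
        show f (ψ t) = f x
        rw [le_antisymm h1 h2]
      rw [setIntegral_congr_fun measurableSet_Ioc hψeq, setIntegral_const, measureReal_def, Real.volume_Ioc,
        ENNReal.toReal_ofReal (by linarith), smul_eq_mul, hφx]
      ring
  have part1 : ∫ t in Ioc 0 (F x), f (ψ t) = ∫ s in Ico 0 x, f s ∂μ := by
    have hg : Integrable ((Ico (0:ℝ) x).indicator f) μ := hf.indicator measurableSet_Ico
    have hgmap : AEStronglyMeasurable ((Ico (0:ℝ) x).indicator f)
        (Measure.map ψ (volume.restrict (Ioc 0 M))) := by rw [hmap]; exact hg.1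
    have hstep : ∫ s in Ico 0 x, f s ∂μ
        = ∫ t in Ioc 0 M, (Ico (0:ℝ) x).indicator f (ψ t) := by
      rw [← integral_indicator measurableSet_Ico, ← hmap,
        integral_map hmeas.aemeasurable hgmap]
    have hEq : EqOn (fun t => (Ico (0:ℝ) x).indicator f (ψ t))
        (fun t => (Ioo (0:ℝ) (F x)).indicator (fun s => f (ψ s)) t) (Ioc 0 M) := by
      intro t ht
      by_cases hlt : t < F x
      · have hmem1 : ψ t ∈ Ico (0:ℝ) x := ⟨hψ_nonneg t ht.1, (hψ_lt_iff t x ht.1 hx1).2 hlt⟩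
        have hmem2 : t ∈ Ioo (0:ℝ) (F x) := ⟨ht.1, hlt⟩
        simp only [indicator_of_mem hmem1, indicator_of_mem hmem2]
      · have hmem1 : ψ t ∉ Ico (0:ℝ) x := fun hm => hlt ((hψ_lt_iff t x ht.1 hx1).1 hm.2)
        have hmem2 : t ∉ Ioo (0:ℝ) (F x) := fun hm => hlt hm.2
        simp only [indicator_of_notMem hmem1, indicator_of_notMem hmem2]
    rw [hstep, setIntegral_congr_fun measurableSet_Ioc hEq,
      setIntegral_indicator measurableSet_Ioo,
      inter_eq_right.mpr (Ioo_subset_Ioc_self.trans (Ioc_subset_Ioc le_rfl (hFM x))),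
      ← integral_Ioc_eq_integral_Ioo]
  calc ∫ t in Ioc 0 (φ x), f (ψ t)
      = ∫ t in Ioc 0 (F x) ∪ Ioc (F x) (φ x), f (ψ t) := by
        rw [Ioc_union_Ioc_eq_Ioc (hFnonneg x) haφ]
    _ = (∫ t in Ioc 0 (F x), f (ψ t)) + ∫ t in Ioc (F x) (φ x), f (ψ t) :=
        setIntegral_union (Ioc_disjoint_Ioc_of_le le_rfl) measurableSet_Ioc hint1 hint2
    _ = (∫ s in Ico 0 x, f s ∂μ) + (μ {x}).toReal / 2 * f x := by rw [part1, part2]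
end

section
/- Let H, E be separable Hilbert spaces, (Ω, μ) a finite measure space, and c : E → L²(H, μ) a Hilbert–Schmidt operator. Then there exists a μ-measurable family of operators c(x) : E → H, defined for μ-a.e. x, such that (c e)(x) = c(x)e for all e ∈ E and μ-a.e. x, each c(x) is Hilbert–Schmidt, and ∫ ‖c(x)‖²_{S₂} dμ(x) = ‖c‖²_{S₂}. -/
open MeasureTheory
open MeasureTheory

lemma summable_mul_of_sq {r s : ℕ → ℝ} (hr0 : ∀ j, 0 ≤ r j) (hs0 : ∀ j, 0 ≤ s j)
    (hr : Summable fun j => r j ^ 2) (hs : Summable fun j => s j ^ 2) :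
    Summable fun j => r j * s j := by
  refine Summable.of_nonneg_of_le (fun j => mul_nonneg (hr0 j) (hs0 j)) (fun j => ?_)
    (((hr.add hs).div_const 2))
  have := sq_nonneg (r j - s j)
  nlinarith

lemma tsum_mul_le_sqrt_mul_sqrt {r s : ℕ → ℝ} (hr0 : ∀ j, 0 ≤ r j) (hs0 : ∀ j, 0 ≤ s j)
    (hr : Summable fun j => r j ^ 2) (hs : Summable fun j => s j ^ 2) :
    ∑' j, r j * s j ≤ Real.sqrt (∑' j, r j ^ 2) * Real.sqrt (∑' j, s j ^ 2) := by
  refine Summable.tsum_le_of_sum_le (summable_mul_of_sq hr0 hs0 hr hs) (fun t => ?_)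
  have h1 : (∑ j ∈ t, r j * s j) ^ 2 ≤ (∑ j ∈ t, r j ^ 2) * (∑ j ∈ t, s j ^ 2) :=
    Finset.sum_mul_sq_le_sq_mul_sq t r s
  have h2 : (∑ j ∈ t, r j ^ 2) ≤ ∑' j, r j ^ 2 :=
    Summable.sum_le_tsum t (fun j _ => sq_nonneg _) hr
  have h3 : (∑ j ∈ t, s j ^ 2) ≤ ∑' j, s j ^ 2 :=
    Summable.sum_le_tsum t (fun j _ => sq_nonneg _) hs
  have h4 : (∑ j ∈ t, r j * s j) ^ 2 ≤ (∑' j, r j ^ 2) * (∑' j, s j ^ 2) := by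
    refine h1.trans (mul_le_mul h2 h3 (Finset.sum_nonneg fun j _ => sq_nonneg _)
      ((Finset.sum_nonneg fun (j : ℕ) _ => sq_nonneg (r j)).trans h2))
  calc ∑ j ∈ t, r j * s j ≤ Real.sqrt ((∑ j ∈ t, r j * s j) ^ 2) := by
        rw [Real.sqrt_sq (Finset.sum_nonneg fun j _ => mul_nonneg (hr0 j) (hs0 j))]
    _ ≤ Real.sqrt ((∑' j, r j ^ 2) * (∑' j, s j ^ 2)) := Real.sqrt_le_sqrt h4
    _ = _ := Real.sqrt_mul (tsum_nonneg fun j => sq_nonneg _) _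

section Tmap
variable {E H : Type*} [NormedAddCommGroup E] [InnerProductSpace ℂ E] [CompleteSpace E]
  [NormedAddCommGroup H] [InnerProductSpace ℂ H] [CompleteSpace H]

lemma repr_sq_summable (bE : HilbertBasis ℕ ℂ E) (e : E) :
    Summable fun j => ‖bE.repr e j‖ ^ 2 := by
  have := (lp.memℓp (bE.repr e)).summable (by norm_num : (0:ℝ) < (2 : ENNReal).toReal)
  simpa [ENNReal.toReal_ofNat, Real.rpow_natCast] using this

lemma repr_sq_tsum (bE : HilbertBasis ℕ ℂ E) (e : E) :
    ∑' j, ‖bE.repr e j‖ ^ 2 = ‖e‖ ^ 2 := by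
  have h := lp.norm_rpow_eq_tsum (by norm_num : (0:ℝ) < (2 : ENNReal).toReal) (bE.repr e)
  have h2 : ‖bE.repr e‖ = ‖e‖ := bE.repr.norm_map e
  rw [h2] at h
  simpa [Real.rpow_natCast] using h.symm

lemma Tmap_summable (bE : HilbertBasis ℕ ℂ E) (a : ℕ → H)
    (ha : Summable fun j => ‖a j‖ ^ 2) (e : E) :
    Summable fun j => bE.repr e j • a j := by
  refine Summable.of_norm ?_
  simp only [norm_smul]
  exact summable_mul_of_sq (fun j => norm_nonneg _) (fun j => norm_nonneg _)
    (repr_sq_summable bE e) ha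

lemma Tmap_norm_le (bE : HilbertBasis ℕ ℂ E) (a : ℕ → H)
    (ha : Summable fun j => ‖a j‖ ^ 2) (e : E) :
    ‖∑' j, bE.repr e j • a j‖ ≤ Real.sqrt (∑' j, ‖a j‖ ^ 2) * ‖e‖ := by
  calc ‖∑' j, bE.repr e j • a j‖ ≤ ∑' j, ‖bE.repr e j • a j‖ :=
        norm_tsum_le_tsum_norm (by
          simp only [norm_smul]
          exact summable_mul_of_sq (fun j => norm_nonneg _) (fun j => norm_nonneg _)
            (repr_sq_summable bE e) ha)
    _ = ∑' j, ‖bE.repr e j‖ * ‖a j‖ := by simp [norm_smul]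
    _ ≤ Real.sqrt (∑' j, ‖bE.repr e j‖ ^ 2) * Real.sqrt (∑' j, ‖a j‖ ^ 2) :=
        tsum_mul_le_sqrt_mul_sqrt (fun j => norm_nonneg _) (fun j => norm_nonneg _)
          (repr_sq_summable bE e) ha
    _ = Real.sqrt (∑' j, ‖a j‖ ^ 2) * ‖e‖ := by
        rw [repr_sq_tsum, Real.sqrt_sq (norm_nonneg _), mul_comm]

/-- The operator `e ↦ ∑' j, ⟪bE j, e⟫ • a j` for an ℓ² family `a`. -/
noncomputable def Tmap (bE : HilbertBasis ℕ ℂ E) (a : ℕ → H)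
    (ha : Summable fun j => ‖a j‖ ^ 2) : E →L[ℂ] H :=
  LinearMap.mkContinuous
    { toFun := fun e => ∑' j, bE.repr e j • a j
      map_add' := fun e f => by
        simp only [map_add, lp.coeFn_add, Pi.add_apply, add_smul]
        exact Summable.tsum_add (Tmap_summable bE a ha e) (Tmap_summable bE a ha f)
      map_smul' := fun r e => by
        simp only [_root_.map_smul, lp.coeFn_smul, Pi.smul_apply, smul_eq_mul, mul_smul,
          RingHom.id_apply]
        exact Summable.tsum_const_smul r (Tmap_summable bE a ha e) }
    (Real.sqrt (∑' j, ‖a j‖ ^ 2)) (fun e => Tmap_norm_le bE a ha e)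

lemma Tmap_apply (bE : HilbertBasis ℕ ℂ E) (a : ℕ → H)
    (ha : Summable fun j => ‖a j‖ ^ 2) (e : E) :
    Tmap bE a ha e = ∑' j, bE.repr e j • a j := rfl

lemma Tmap_basis (bE : HilbertBasis ℕ ℂ E) (a : ℕ → H)
    (ha : Summable fun j => ‖a j‖ ^ 2) (i : ℕ) :
    Tmap bE a ha (bE i) = a i := by
  classical
  rw [Tmap_apply, bE.repr_self]
  have : ∀ j, (lp.single 2 i (1:ℂ) : ∀ _ : ℕ, ℂ) j • a j
      = if j = i then a i else 0 := by
    intro j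
    by_cases h : j = i
    · subst h; rw [lp.single_apply_self]; simp
    · rw [lp.single_apply_ne _ _ _ h, if_neg h]; simp
  rw [tsum_congr this, tsum_ite_eq]
end Tmap

section L2aux
variable {H : Type*} [NormedAddCommGroup H] [InnerProductSpace ℂ H] [CompleteSpace H]
  {Ω : Type*} [MeasurableSpace Ω] {μ : Measure Ω}

lemma L2_norm_sq_integral (g : Lp H 2 μ) :
    Integrable (fun x => ‖g x‖ ^ 2) μ ∧ ∫ x, ‖g x‖ ^ 2 ∂μ = ‖g‖ ^ 2 := by
  have hi : Integrable (fun x => (inner ℂ (g x) (g x) : ℂ)) μ :=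
    L2.integrable_inner (𝕜 := ℂ) g g
  have hre : Integrable (fun x => RCLike.re (inner ℂ (g x) (g x) : ℂ)) μ := hi.re
  have heq : (fun x => RCLike.re (inner ℂ (g x) (g x) : ℂ)) = fun x => ‖g x‖ ^ 2 :=
    funext fun x => inner_self_eq_norm_sq (𝕜 := ℂ) (g x)
  constructor
  · rw [← heq]; exact hre
  · calc ∫ x, ‖g x‖ ^ 2 ∂μ = ∫ x, RCLike.re (inner ℂ (g x) (g x) : ℂ) ∂μ := by rw [heq]
      _ = RCLike.re (∫ x, (inner ℂ (g x) (g x) : ℂ) ∂μ) := integral_re hi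
      _ = RCLike.re (inner ℂ g g : ℂ) := by rw [← L2.inner_def]
      _ = ‖g‖ ^ 2 := inner_self_eq_norm_sq (𝕜 := ℂ) g

lemma L2_lintegral_norm_sq (g : Lp H 2 μ) :
    ∫⁻ x, (‖g x‖₊ : ENNReal) ^ 2 ∂μ = ENNReal.ofReal (‖g‖ ^ 2) := by
  obtain ⟨hi, he⟩ := L2_norm_sq_integral g
  rw [← he, ofReal_integral_eq_lintegral_ofReal hi (Filter.Eventually.of_forall fun x => sq_nonneg _)]
  refine lintegral_congr fun x => ?_
  rw [ENNReal.ofReal_pow (norm_nonneg _), ofReal_norm, enorm_eq_nnnorm]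
end L2aux

/-- A Hilbert–Schmidt operator `c : E → L²(H, μ)` is given by a measurable family of
Hilbert–Schmidt operators `c(x) : E → H` with `(c e)(x) = c(x) e` a.e. and
`∫ ‖c(x)‖²_{S₂} dμ = ‖c‖²_{S₂}`. -/
theorem stmt_10 {E H : Type*} [NormedAddCommGroup E] [InnerProductSpace ℂ E] [CompleteSpace E]
    [NormedAddCommGroup H] [InnerProductSpace ℂ H] [CompleteSpace H]
    {Ω : Type*} [MeasurableSpace Ω] (μ : Measure Ω) [IsFiniteMeasure μ]
    (bE : HilbertBasis ℕ ℂ E)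
    (c : E →L[ℂ] (Lp H 2 μ))
    (hHS : Summable fun j => ‖c (bE j)‖ ^ 2) :
    ∃ C : Ω → (E →L[ℂ] H),
      (∀ e : E, AEStronglyMeasurable (fun x => C x e) μ) ∧
      (∀ e : E, ∀ᵐ x ∂μ, (c e : Ω → H) x = C x e) ∧
      (∀ᵐ x ∂μ, Summable fun j => ‖C x (bE j)‖ ^ 2) ∧
      ∫ x, (∑' j, ‖C x (bE j)‖ ^ 2) ∂μ = ∑' j, ‖c (bE j)‖ ^ 2 := by
  classical
  have hmeas : ∀ j, AEStronglyMeasurable (c (bE j) : Ω → H) μ :=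
    fun j => Lp.aestronglyMeasurable _
  set f : ℕ → Ω → H := fun j => (hmeas j).mk _ with hfdef
  have hf_sm : ∀ j, StronglyMeasurable (f j) := fun j => (hmeas j).stronglyMeasurable_mk
  have hf_ae : ∀ j, (c (bE j) : Ω → H) =ᵐ[μ] f j := fun j => (hmeas j).ae_eq_mk
  -- lintegral of each ‖f j‖²
  have hlint : ∀ j, ∫⁻ x, (‖f j x‖₊ : ENNReal) ^ 2 ∂μ = ENNReal.ofReal (‖c (bE j)‖ ^ 2) := by
    intro j
    rw [← L2_lintegral_norm_sq (c (bE j))]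
    refine lintegral_congr_ae ?_
    filter_upwards [hf_ae j] with x hx
    rw [hx]
  have hmeasG : ∀ j, Measurable fun x => (‖f j x‖₊ : ENNReal) ^ 2 := fun j =>
    ((hf_sm j).enorm).pow_const 2
  have htop : ∑' j, ∫⁻ x, (‖f j x‖₊ : ENNReal) ^ 2 ∂μ ≠ ⊤ := by
    simp_rw [hlint]
    rw [← ENNReal.ofReal_tsum_of_nonneg (fun j => sq_nonneg _) hHS]
    exact ENNReal.ofReal_ne_top
  -- a.e. ℓ² summability of the fibers
  have hP : ∀ᵐ x ∂μ, Summable fun j => ‖f j x‖ ^ 2 := by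
    have h1 : ∫⁻ x, ∑' j, (‖f j x‖₊ : ENNReal) ^ 2 ∂μ ≠ ⊤ := by
      rw [lintegral_tsum fun j => (hmeasG j).aemeasurable]; exact htop
    have h2 := ae_lt_top (Measurable.ennreal_tsum hmeasG) h1
    filter_upwards [h2] with x hx
    have hx' : ∑' j, ((‖f j x‖₊ ^ 2 : NNReal) : ENNReal) ≠ ⊤ := by
      simpa [ENNReal.coe_pow] using hx.ne
    have hsum := ENNReal.tsum_coe_ne_top_iff_summable.mp hx'
    have := NNReal.summable_coe.mpr hsum
    simpa [NNReal.coe_pow, coe_nnnorm] using this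
  set P : Ω → Prop := fun x => Summable fun j => ‖f j x‖ ^ 2 with hPdef
  set C : Ω → (E →L[ℂ] H) := fun x =>
    if hx : P x then Tmap bE (fun j => f j x) hx else 0 with hCdef
  have hCb : ∀ x, P x → ∀ j, C x (bE j) = f j x := by
    intro x hx j
    rw [hCdef]; simp only [dif_pos hx]
    exact Tmap_basis bE _ hx j
  have hCtend : ∀ x, P x → ∀ e : E,
      Filter.Tendsto (fun n => ∑ j ∈ Finset.range n, bE.repr e j • f j x)
        Filter.atTop (nhds (C x e)) := by
    intro x hx e
    have hsum : Summable fun j => bE.repr e j • f j x := Tmap_summable bE _ hx e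
    have := hsum.hasSum.tendsto_sum_nat
    rw [hCdef]; simp only [dif_pos hx]
    rw [Tmap_apply]
    exact this
  have hFn_meas : ∀ (e : E) (n : ℕ),
      AEStronglyMeasurable (fun x => ∑ j ∈ Finset.range n, bE.repr e j • f j x) μ := by
    intro e n
    refine Finset.aestronglyMeasurable_fun_sum _ fun j _ => ?_
    exact ((hf_sm j).aestronglyMeasurable).const_smul _
  refine ⟨C, ?_, ?_, ?_, ?_⟩
  · -- measurability
    intro e
    refine aestronglyMeasurable_of_tendsto_ae Filter.atTop (hFn_meas e) ?_
    filter_upwards [hP] with x hx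
    exact hCtend x hx e
  · -- a.e. identification
    intro e
    have h1 : HasSum (fun j => bE.repr e j • c (bE j)) (c e) := by
      have := (bE.hasSum_repr e).mapL c
      simpa using this
    set Q : ℕ → Lp H 2 μ := fun n => ∑ j ∈ Finset.range n, bE.repr e j • c (bE j) with hQdef
    have hQ : Filter.Tendsto Q Filter.atTop (nhds (c e)) := h1.tendsto_sum_nat
    have hsn : Filter.Tendsto (fun n => eLpNorm ((Q n : Ω → H) - (c e : Ω → H)) 2 μ)
        Filter.atTop (nhds 0) := by
      have heq : ∀ n, eLpNorm ((Q n : Ω → H) - (c e : Ω → H)) 2 μ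
          = ENNReal.ofReal ‖Q n - c e‖ := by
        intro n
        rw [← eLpNorm_congr_ae (Lp.coeFn_sub (Q n) (c e)), Lp.norm_def,
          ENNReal.ofReal_toReal (Lp.eLpNorm_ne_top _)]
      simp_rw [heq]
      have : Filter.Tendsto (fun n => ‖Q n - c e‖) Filter.atTop (nhds 0) :=
        tendsto_iff_norm_sub_tendsto_zero.mp hQ
      have := (ENNReal.continuous_ofReal.tendsto 0).comp this
      simpa [Function.comp_def] using this
    have hTiM := tendstoInMeasure_of_tendsto_eLpNorm (two_ne_zero)
      (fun n => Lp.aestronglyMeasurable (Q n)) (Lp.aestronglyMeasurable (c e)) hsn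
    obtain ⟨ns, hns, hae⟩ := hTiM.exists_seq_tendsto_ae
    have hQF : ∀ n, (Q n : Ω → H) =ᵐ[μ] fun x => ∑ j ∈ Finset.range n, bE.repr e j • f j x := by
      intro n
      induction n with
      | zero => simp only [hQdef, Finset.range_zero, Finset.sum_empty]; exact Lp.coeFn_zero H 2 μ
      | succ n ih =>
        have h1 : Q (n + 1) = Q n + bE.repr e n • c (bE n) := by
          rw [hQdef]; simp [Finset.sum_range_succ]
        rw [h1]
        filter_upwards [Lp.coeFn_add (Q n) (bE.repr e n • c (bE n)), ih,
          Lp.coeFn_smul (bE.repr e n) (c (bE n)), hf_ae n] with x h2 h3 h4 h5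
        rw [h2, Pi.add_apply, h3, Finset.sum_range_succ, h4, Pi.smul_apply, h5]
    filter_upwards [hP, hae, ae_all_iff.mpr hQF] with x hx hx2 hx3
    have hFx := hCtend x hx e
    have hsub : Filter.Tendsto (fun k => (Q (ns k) : Ω → H) x) Filter.atTop (nhds (C x e)) := by
      have h5 : Filter.Tendsto
          (fun k => ∑ j ∈ Finset.range (ns k), bE.repr e j • f j x)
          Filter.atTop (nhds (C x e)) := hFx.comp hns.tendsto_atTop
      exact h5.congr fun k => (hx3 (ns k)).symm
    exact tendsto_nhds_unique hx2 hsub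
  · -- a.e. summability
    filter_upwards [hP] with x hx
    have : (fun j => ‖C x (bE j)‖ ^ 2) = fun j => ‖f j x‖ ^ 2 :=
      funext fun j => by rw [hCb x hx j]
    rw [this]; exact hx
  · -- integral identity
    have hae2 : (fun x => ∑' j, ‖C x (bE j)‖ ^ 2) =ᵐ[μ] fun x => ∑' j, ‖f j x‖ ^ 2 := by
      filter_upwards [hP] with x hx
      exact tsum_congr fun j => by rw [hCb x hx j]
    rw [integral_congr_ae hae2]
    have htop' : ∑' j, ∫⁻ x, ‖(‖f j x‖ ^ 2 : ℝ)‖₊ ∂μ ≠ ⊤ := by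
      have : ∀ j x, (‖(‖f j x‖ ^ 2 : ℝ)‖₊ : ENNReal) = (‖f j x‖₊ : ENNReal) ^ 2 := by
        intro j x
        rw [nnnorm_pow, nnnorm_norm, ENNReal.coe_pow]
      simp_rw [this]
      exact htop
    rw [integral_tsum (fun j => ((hf_sm j).norm.measurable.pow_const 2).aestronglyMeasurable)
      htop']
    refine tsum_congr fun j => ?_
    have h1 : ∫ x, ‖f j x‖ ^ 2 ∂μ = ∫ x, ‖(c (bE j) : Ω → H) x‖ ^ 2 ∂μ := by
      refine integral_congr_ae ?_
      filter_upwards [hf_ae j] with x hx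
      rw [hx]
    rw [h1, (L2_norm_sq_integral (c (bE j))).2]
end

section
/- Let α be a selfadjoint operator on a Hilbert space H, c : E → H Hilbert–Schmidt with cc* = k, μ₀ > 0, and z ∈ ℂ₊ with Im z ≥ 1 + ½ μ₀‖k‖. Then for all t with |t| ≤ ½μ₀, the operator t·k + i(α − zI) is boundedly invertible, and ‖(t·k + i(α − zI))⁻¹‖ ≤ 1, ‖c*(t·k + i(α − zI))⁻¹c‖ ≤ ‖k‖, and ‖c*(t·k + i(α − zI))⁻¹c‖_{S₁} ≤ ‖k‖_{S₁}. -/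
open ContinuousLinearMap

/-- The trace norm (Schatten `S₁` norm) of an operator, via its characterization as the
supremum over pairs of finite orthonormal families of `Σ_j |⟨f_j, T e_j⟩|`. -/
noncomputable def traceNorm {F : Type*} [NormedAddCommGroup F] [InnerProductSpace ℂ F]
    (T : F →L[ℂ] F) : ENNReal :=
  ⨆ (n : ℕ) (e : Fin n → F) (f : Fin n → F) (_ : Orthonormal ℂ e) (_ : Orthonormal ℂ f),
    ENNReal.ofReal (∑ j, ‖(inner ℂ (f j) (T (e j)) : ℂ)‖)

set_option maxHeartbeats 1000000

section Aux

variable {E H : Type*} [NormedAddCommGroup E] [InnerProductSpace ℂ E] [CompleteSpace E]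
    [NormedAddCommGroup H] [InnerProductSpace ℂ H] [CompleteSpace H]

/-- For a finite orthonormal family `e` in `E`, `∑ ‖c e_j‖²` is bounded by the trace norm
of `c c*`. -/
lemma sum_norm_sq_le_traceNorm (c : E →L[ℂ] H) {n : ℕ} (e : Fin n → E)
    (he : Orthonormal ℂ e) :
    ENNReal.ofReal (∑ j, ‖c (e j)‖ ^ 2) ≤ traceNorm (c.comp (adjoint c)) := by
  classical
  set V : Submodule ℂ H := Submodule.span ℂ (Set.range fun j => c (e j)) with hV
  haveI : FiniteDimensional ℂ V := FiniteDimensional.span_of_finite ℂ (Set.finite_range _)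
  set m := Module.finrank ℂ V with hm
  let b : OrthonormalBasis (Fin m) ℂ V := stdOrthonormalBasis ℂ V
  have hmem : ∀ j, c (e j) ∈ V := fun j => Submodule.subset_span ⟨j, rfl⟩
  -- Parseval within V
  have hnorm : ∀ j, ‖c (e j)‖ ^ 2 = ∑ i, ‖(inner ℂ ((b i : H)) (c (e j)) : ℂ)‖ ^ 2 := by
    intro j
    set v : V := ⟨c (e j), hmem j⟩ with hv
    have h1 : ‖c (e j)‖ = ‖b.repr v‖ := by
      rw [b.repr.norm_map v]; rfl
    rw [h1, EuclideanSpace.norm_eq, Real.sq_sqrt (by positivity)]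
    refine Finset.sum_congr rfl fun i _ => ?_
    rw [b.repr_apply_apply v i, Submodule.coe_inner]
  -- swap and Bessel
  have hswap : ∑ j, ‖c (e j)‖ ^ 2 ≤ ∑ i, ‖adjoint c ((b i : H))‖ ^ 2 := by
    calc ∑ j, ‖c (e j)‖ ^ 2
        = ∑ j, ∑ i, ‖(inner ℂ ((b i : H)) (c (e j)) : ℂ)‖ ^ 2 :=
          Finset.sum_congr rfl fun j _ => hnorm j
      _ = ∑ i, ∑ j, ‖(inner ℂ (adjoint c ((b i : H))) (e j) : ℂ)‖ ^ 2 := by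
          rw [Finset.sum_comm]
          refine Finset.sum_congr rfl fun i _ => Finset.sum_congr rfl fun j _ => ?_
          rw [adjoint_inner_left]
      _ ≤ ∑ i, ‖adjoint c ((b i : H))‖ ^ 2 := by
          refine Finset.sum_le_sum fun i _ => ?_
          have := he.sum_inner_products_le (s := Finset.univ) (adjoint c ((b i : H)))
          calc ∑ j, ‖(inner ℂ (adjoint c ((b i : H))) (e j) : ℂ)‖ ^ 2
              = ∑ j, ‖(inner ℂ (e j) (adjoint c ((b i : H))) : ℂ)‖ ^ 2 := by
                refine Finset.sum_congr rfl fun j _ => ?_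
                exact congrArg (fun r => r ^ 2) (norm_inner_symm _ _)
            _ ≤ _ := this
  -- the family (b i : H) is orthonormal in H
  have hb : Orthonormal ℂ (fun i => ((b i : H))) := b.orthonormal.comp_linearIsometry V.subtypeₗᵢ
  -- bound by the sup
  have hterm : ∀ i, ‖adjoint c ((b i : H))‖ ^ 2
      = ‖(inner ℂ ((b i : H)) ((c.comp (adjoint c)) ((b i : H))) : ℂ)‖ := by
    intro i
    rw [ContinuousLinearMap.comp_apply, ← adjoint_inner_left,
      inner_self_eq_norm_sq_to_K]
    simp [pow_two]
  have hle : ENNReal.ofReal (∑ i, ‖(inner ℂ ((b i : H))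
      ((c.comp (adjoint c)) ((b i : H))) : ℂ)‖) ≤ traceNorm (c.comp (adjoint c)) := by
    rw [traceNorm]
    refine le_trans ?_ (le_iSup _ m)
    refine le_trans ?_ (le_iSup _ (fun i => ((b i : H))))
    refine le_trans ?_ (le_iSup _ (fun i => ((b i : H))))
    rw [iSup_pos hb, iSup_pos hb]
  refine le_trans ?_ hle
  refine ENNReal.ofReal_le_ofReal ?_
  calc ∑ j, ‖c (e j)‖ ^ 2 ≤ ∑ i, ‖adjoint c ((b i : H))‖ ^ 2 := hswap
    _ = _ := Finset.sum_congr rfl fun i _ => hterm i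

end Aux

/-- For selfadjoint `α`, Hilbert–Schmidt `c` with `k = cc*`, `μ₀ > 0` and
`Im z ≥ 1 + ½μ₀‖k‖`: for all `|t| ≤ ½μ₀`, `t·k + i(α − z)` is invertible with inverse a
contraction, `‖c*(t·k + i(α − z))⁻¹c‖ ≤ ‖k‖` and
`‖c*(t·k + i(α − z))⁻¹c‖_{S₁} ≤ ‖k‖_{S₁}`. -/
theorem stmt_12 {E H : Type*} [NormedAddCommGroup E] [InnerProductSpace ℂ E] [CompleteSpace E]
    [NormedAddCommGroup H] [InnerProductSpace ℂ H] [CompleteSpace H]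
    (α : H →L[ℂ] H) (hα : IsSelfAdjoint α)
    (c : E →L[ℂ] H)
    (hHS : traceNorm (c.comp (adjoint c)) ≠ ⊤)
    (μ₀ : ℝ) (hμ₀ : 0 < μ₀) (z : ℂ)
    (hz : 1 + μ₀ * ‖c.comp (adjoint c)‖ / 2 ≤ z.im) :
    ∀ t : ℝ, |t| ≤ μ₀ / 2 →
      IsUnit (t • c.comp (adjoint c) + Complex.I • (α - z • 1)) ∧
      ‖Ring.inverse (t • c.comp (adjoint c) + Complex.I • (α - z • 1))‖ ≤ 1 ∧
      ‖(adjoint c).comp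
          ((Ring.inverse (t • c.comp (adjoint c) + Complex.I • (α - z • 1))).comp c)‖
        ≤ ‖c.comp (adjoint c)‖ ∧
      traceNorm ((adjoint c).comp
          ((Ring.inverse (t • c.comp (adjoint c) + Complex.I • (α - z • 1))).comp c))
        ≤ traceNorm (c.comp (adjoint c)) := by
  intro t ht
  set k : H →L[ℂ] H := c.comp (adjoint c) with hk
  set A : H →L[ℂ] H := t • k + Complex.I • (α - z • 1) with hA
  have hknn : (0:ℝ) ≤ ‖k‖ := norm_nonneg _
  have hkE : ‖k‖ = ‖adjoint c‖ * ‖adjoint c‖ := by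
    have := norm_adjoint_comp_self (adjoint c)
    rwa [adjoint_adjoint] at this
  have hadj_eq : adjoint α = α := hα
  -- ⟪x, k x⟫ = ‖c* x‖²
  have hkinner : ∀ x : H, (inner ℂ x (k x) : ℂ) = ((‖adjoint c x‖ : ℂ)) ^ 2 := by
    intro x
    rw [hk, ContinuousLinearMap.comp_apply, ← adjoint_inner_left,
      inner_self_eq_norm_sq_to_K]
    norm_cast
  have hsq : ∀ x : H, ‖adjoint c x‖ ^ 2 ≤ ‖k‖ * ‖x‖ ^ 2 := by
    intro x
    have h1 := (adjoint c).le_opNorm x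
    have h2 : (0:ℝ) ≤ ‖adjoint c‖ := norm_nonneg _
    nlinarith [norm_nonneg (adjoint c x), norm_nonneg x]
  -- ⟪x, α x⟫ is real
  have hself : ∀ x : H, (inner ℂ x (α x) : ℂ).im = 0 := by
    intro x
    have h1 : (inner ℂ x (α x) : ℂ) = (inner ℂ (α x) x : ℂ) := by
      conv_lhs => rw [← hadj_eq]
      rw [adjoint_inner_right]
    have h2 : (inner ℂ (α x) x : ℂ) = (starRingEnd ℂ) (inner ℂ x (α x) : ℂ) :=
      (inner_conj_symm (α x) x).symm
    have h3 : (starRingEnd ℂ) (inner ℂ x (α x) : ℂ) = (inner ℂ x (α x) : ℂ) :=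
      (h1.trans h2).symm
    exact Complex.conj_eq_iff_im.mp h3
  -- real part of ⟪x, A x⟫
  have hre : ∀ x : H, (inner ℂ x (A x) : ℂ).re = t * ‖adjoint c x‖ ^ 2 + z.im * ‖x‖ ^ 2 := by
    intro x
    have hx : (inner ℂ x (A x) : ℂ)
        = (t : ℂ) * ((‖adjoint c x‖ : ℂ)) ^ 2
          + Complex.I * ((inner ℂ x (α x) : ℂ) - z * ((‖x‖ : ℂ)) ^ 2) := by
      have hsm : t • (k x) = ((t:ℂ)) • (k x) := by
        rw [RCLike.real_smul_eq_coe_smul (K := ℂ)]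
        rfl
      rw [hA]
      simp only [ContinuousLinearMap.add_apply, ContinuousLinearMap.smul_apply,
        ContinuousLinearMap.sub_apply, ContinuousLinearMap.one_apply]
      rw [inner_add_right, hsm, inner_smul_right, inner_smul_right, inner_sub_right,
        inner_smul_right, hkinner, inner_self_eq_norm_sq_to_K]
      norm_cast
    rw [hx]
    have him := hself x
    simp only [Complex.add_re, Complex.mul_re, Complex.mul_im, Complex.sub_im,
      Complex.sub_re, Complex.I_re, Complex.I_im, ← Complex.ofReal_pow,
      Complex.ofReal_re, Complex.ofReal_im, him]
    ring
  -- coercivity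
  have hcoer : ∀ x : H, ‖x‖ ^ 2 ≤ (inner ℂ x (A x) : ℂ).re := by
    intro x
    rw [hre]
    rcases abs_le.mp ht with ⟨hl, hu⟩
    have h1 := hsq x
    have h2 : (0:ℝ) ≤ ‖adjoint c x‖ ^ 2 := sq_nonneg _
    have h3 : (0:ℝ) ≤ ‖x‖ ^ 2 := sq_nonneg _
    nlinarith [mul_le_mul_of_nonneg_right hz h3]
  have hbound : ∀ (B : H →L[ℂ] H), (∀ x, ‖x‖ ^ 2 ≤ (inner ℂ x (B x) : ℂ).re) →
      ∀ x, ‖x‖ ≤ ‖B x‖ := by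
    intro B hB x
    have h1 : ‖x‖ ^ 2 ≤ ‖x‖ * ‖B x‖ := by
      refine le_trans (hB x) ?_
      simpa using re_inner_le_norm (𝕜 := ℂ) x (B x)
    rcases eq_or_lt_of_le (norm_nonneg x) with h | h
    · rw [← h]; exact norm_nonneg _
    · nlinarith
  have hlowA : ∀ x : H, ‖x‖ ≤ ‖A x‖ := hbound A hcoer
  have hcoerStar : ∀ x : H, ‖x‖ ^ 2 ≤ (inner ℂ x (adjoint A x) : ℂ).re := by
    intro x
    have h1 : (inner ℂ x (adjoint A x) : ℂ) = (inner ℂ (A x) x : ℂ) := adjoint_inner_right A x x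
    have h2 : (inner ℂ (A x) x : ℂ) = (starRingEnd ℂ) (inner ℂ x (A x) : ℂ) :=
      (inner_conj_symm (A x) x).symm
    rw [h1, h2, Complex.conj_re]
    exact hcoer x
  have hlowAstar : ∀ x : H, ‖x‖ ≤ ‖adjoint A x‖ := hbound (adjoint A) hcoerStar
  -- injectivity
  have hker : LinearMap.ker (A : H →ₗ[ℂ] H) = ⊥ := by
    rw [Submodule.eq_bot_iff]
    intro x hx
    have : A x = 0 := hx
    have h1 := hlowA x
    rw [this, norm_zero] at h1
    exact norm_le_zero_iff.mp h1
  -- closed range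
  have hclosed : IsClosed (LinearMap.range (A : H →ₗ[ℂ] H) : Set H) := by
    have halip : AntilipschitzWith 1 A :=
      A.antilipschitz_of_bound (K := 1) (fun x => by simpa using hlowA x)
    have h2 := halip.isClosed_range A.uniformContinuous
    have hset : (LinearMap.range (A : H →ₗ[ℂ] H) : Set H) = Set.range (⇑A) := by
      ext y
      simp [LinearMap.mem_range]
    rw [hset]
    exact h2
  -- surjectivity
  have hrange : LinearMap.range (A : H →ₗ[ℂ] H) = ⊤ := by
    haveI : CompleteSpace (LinearMap.range (A : H →ₗ[ℂ] H)) := hclosed.completeSpace_coe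
    rw [← Submodule.orthogonal_eq_bot_iff, Submodule.eq_bot_iff]
    intro x hx
    rw [Submodule.mem_orthogonal] at hx
    have h0 : adjoint A x = 0 := by
      have h1 : (inner ℂ (adjoint A x) (adjoint A x) : ℂ) = 0 := by
        rw [adjoint_inner_right]
        exact hx _ ⟨adjoint A x, rfl⟩
      exact inner_self_eq_zero.mp h1
    have h2 := hlowAstar x
    rw [h0, norm_zero] at h2
    exact norm_le_zero_iff.mp h2
  -- the inverse
  let eA : H ≃L[ℂ] H := ContinuousLinearEquiv.ofBijective A hker hrange
  have heA : ∀ x, eA x = A x := fun x => rfl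
  set B : H →L[ℂ] H := (eA.symm : H →L[ℂ] H) with hB
  have hAB : A.comp B = 1 := by
    ext y
    have : A (eA.symm y) = eA (eA.symm y) := (heA _).symm
    simp only [ContinuousLinearMap.comp_apply, ContinuousLinearMap.one_apply]
    rw [hB]
    simp only [ContinuousLinearEquiv.coe_coe]
    rw [this, eA.apply_symm_apply]
  have hBA : B.comp A = 1 := by
    ext x
    have : A x = eA x := (heA _)
    simp only [ContinuousLinearMap.comp_apply, ContinuousLinearMap.one_apply]
    rw [hB]
    simp only [ContinuousLinearEquiv.coe_coe]
    rw [this, eA.symm_apply_apply]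
  have hmulAB : A * B = 1 := hAB
  have hmulBA : B * A = 1 := hBA
  let u : (H →L[ℂ] H)ˣ := ⟨A, B, hmulAB, hmulBA⟩
  have hu : IsUnit A := ⟨u, rfl⟩
  have hRinv : Ring.inverse A = B := by
    have h1 : Ring.inverse (u : H →L[ℂ] H) = ((u⁻¹ : (H →L[ℂ] H)ˣ) : H →L[ℂ] H) :=
      Ring.inverse_unit u
    exact h1
  -- norm of B
  have hBle : ∀ y, ‖B y‖ ≤ ‖y‖ := by
    intro y
    have h1 := hlowA (B y)
    have h2 : A (B y) = y := by
      have := congrArg (fun f => f y) hAB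
      simpa using this
    rwa [h2] at h1
  have hBnorm : ‖B‖ ≤ 1 := by
    refine ContinuousLinearMap.opNorm_le_bound _ zero_le_one fun y => ?_
    rw [one_mul]; exact hBle y
  refine ⟨hu, ?_, ?_, ?_⟩
  · rw [hRinv]; exact hBnorm
  · rw [hRinv]
    calc ‖(adjoint c).comp (B.comp c)‖
        ≤ ‖adjoint c‖ * ‖B.comp c‖ := ContinuousLinearMap.opNorm_comp_le _ _
      _ ≤ ‖adjoint c‖ * (‖B‖ * ‖c‖) := by
          refine mul_le_mul_of_nonneg_left (ContinuousLinearMap.opNorm_comp_le _ _)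
            (norm_nonneg _)
      _ ≤ ‖adjoint c‖ * (1 * ‖c‖) := by
          refine mul_le_mul_of_nonneg_left ?_ (norm_nonneg _)
          exact mul_le_mul_of_nonneg_right hBnorm (norm_nonneg _)
      _ = ‖adjoint c‖ * ‖adjoint c‖ := by
          rw [one_mul, LinearIsometryEquiv.norm_map ContinuousLinearMap.adjoint c]
      _ = ‖k‖ := hkE.symm
  · rw [hRinv]
    set M : ℝ := (traceNorm k).toReal with hM
    have hM0 : 0 ≤ M := ENNReal.toReal_nonneg
    have hMeq : traceNorm k = ENNReal.ofReal M := (ENNReal.ofReal_toReal hHS).symm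
    rw [traceNorm]
    refine iSup_le fun n => iSup_le fun ef => iSup_le fun ff => iSup_le fun hef =>
      iSup_le fun hff => ?_
    have hsumE : ∑ j, ‖c (ef j)‖ ^ 2 ≤ M := by
      have h1 := sum_norm_sq_le_traceNorm c ef hef
      rw [hMeq] at h1
      have := (ENNReal.ofReal_le_ofReal_iff hM0).mp h1
      linarith
    have hsumF : ∑ j, ‖c (ff j)‖ ^ 2 ≤ M := by
      have h1 := sum_norm_sq_le_traceNorm c ff hff
      rw [hMeq] at h1
      have := (ENNReal.ofReal_le_ofReal_iff hM0).mp h1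
      linarith
    have hstep : ∀ j, ‖(inner ℂ (ff j) (((adjoint c).comp (B.comp c)) (ef j)) : ℂ)‖
        ≤ (‖c (ff j)‖ ^ 2 + ‖c (ef j)‖ ^ 2) / 2 := by
      intro j
      have h1 : (inner ℂ (ff j) (((adjoint c).comp (B.comp c)) (ef j)) : ℂ)
          = (inner ℂ (c (ff j)) (B (c (ef j))) : ℂ) := by
        simp only [ContinuousLinearMap.comp_apply]
        rw [adjoint_inner_right]
      rw [h1]
      have h2 : ‖(inner ℂ (c (ff j)) (B (c (ef j))) : ℂ)‖ ≤ ‖c (ff j)‖ * ‖B (c (ef j))‖ :=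
        norm_inner_le_norm _ _
      have h3 : ‖B (c (ef j))‖ ≤ ‖c (ef j)‖ := hBle _
      have h4 : ‖c (ff j)‖ * ‖B (c (ef j))‖ ≤ ‖c (ff j)‖ * ‖c (ef j)‖ :=
        mul_le_mul_of_nonneg_left h3 (norm_nonneg _)
      nlinarith [sq_nonneg (‖c (ff j)‖ - ‖c (ef j)‖), norm_nonneg (c (ff j)),
        norm_nonneg (c (ef j))]
    have hsum : ∑ j, ‖(inner ℂ (ff j) (((adjoint c).comp (B.comp c)) (ef j)) : ℂ)‖ ≤ M := by
      calc ∑ j, ‖(inner ℂ (ff j) (((adjoint c).comp (B.comp c)) (ef j)) : ℂ)‖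
          ≤ ∑ j, (‖c (ff j)‖ ^ 2 + ‖c (ef j)‖ ^ 2) / 2 :=
            Finset.sum_le_sum fun j _ => hstep j
        _ = ((∑ j, ‖c (ff j)‖ ^ 2) + ∑ j, ‖c (ef j)‖ ^ 2) / 2 := by
            rw [← Finset.sum_add_distrib, Finset.sum_div]
        _ ≤ (M + M) / 2 := by linarith
        _ = M := by ring
    rw [hMeq]
    exact ENNReal.ofReal_le_ofReal hsum
end

section
/- Let α be a selfadjoint operator on a Hilbert space H, c : E → H a bounded operator, μ_x > 0, and z ∈ ℂ₊. Then Re[I − (i/2) μ_x c*(α − zI)⁻¹ c] = I + (1/2)(Im z) μ_x c*(α − zI)⁻¹(α − zI)⁻ᵃ* c ≥ I; in particular I − (i/2) μ_x c*(α − zI)⁻¹ c is boundedly invertible with inverse of norm at most 1 and depends analytically on z ∈ ℂ₊. -/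
open ContinuousLinearMap

namespace Stmt15Aux

variable {E H : Type*} [NormedAddCommGroup E] [InnerProductSpace ℂ E] [CompleteSpace E]
  [NormedAddCommGroup H] [InnerProductSpace ℂ H] [CompleteSpace H]

local notation "⟪" x ", " y "⟫" => @inner ℂ _ _ x y

lemma isUnit_res (α : H →L[ℂ] H) (hα : IsSelfAdjoint α) {z : ℂ} (hz : z.im ≠ 0) :
    IsUnit (α - z • (1 : H →L[ℂ] H)) := by
  have h : z ∉ spectrum ℂ α := fun h => hz (hα.im_eq_zero_of_mem_spectrum h)
  rw [spectrum.mem_iff, not_not] at h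
  have heq : α - z • (1 : H →L[ℂ] H) = -(algebraMap ℂ (H →L[ℂ] H) z - α) := by
    rw [Algebra.algebraMap_eq_smul_one]
    abel
  rw [heq]
  exact h.neg

lemma coercive_isUnit (T : E →L[ℂ] E)
    (h : ∀ x : E, ‖x‖ ^ 2 ≤ RCLike.re (⟪T x, x⟫)) :
    IsUnit T ∧ ‖Ring.inverse T‖ ≤ 1 := by
  have hgen : ∀ (S : E →L[ℂ] E), (∀ x : E, ‖x‖ ^ 2 ≤ RCLike.re (⟪S x, x⟫)) →
      ∀ x : E, ‖x‖ ≤ ‖S x‖ := by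
    intro S hS x
    rcases eq_or_ne x 0 with rfl | hx
    · simp
    have h1 : ‖x‖ * ‖x‖ ≤ ‖S x‖ * ‖x‖ := by
      calc ‖x‖ * ‖x‖ = ‖x‖ ^ 2 := (sq ‖x‖).symm
        _ ≤ RCLike.re (⟪S x, x⟫) := hS x
        _ ≤ ‖(⟪S x, x⟫ : ℂ)‖ := RCLike.re_le_norm _
        _ ≤ ‖S x‖ * ‖x‖ := norm_inner_le_norm _ _
    exact le_of_mul_le_mul_right h1 (norm_pos_iff.mpr hx)
  have hlow : ∀ x : E, ‖x‖ ≤ ‖T x‖ := hgen T h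
  have hadj : ∀ x : E, ‖x‖ ≤ ‖adjoint T x‖ := by
    refine hgen _ (fun x => ?_)
    have : (⟪adjoint T x, x⟫) = starRingEnd ℂ (⟪T x, x⟫) := by
      rw [adjoint_inner_left, ← inner_conj_symm]
    rw [this, RCLike.conj_re]
    exact h x
  have hker : LinearMap.ker (T : E →ₗ[ℂ] E) = ⊥ := by
    rw [Submodule.eq_bot_iff]
    intro x hx
    rw [LinearMap.mem_ker] at hx
    have := hlow x
    rw [show T x = 0 from hx, norm_zero] at this
    exact norm_le_zero_iff.mp this
  have hanti : AntilipschitzWith 1 T := by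
    refine AntilipschitzWith.of_le_mul_dist (fun x y => ?_)
    simpa [dist_eq_norm, ← map_sub] using hlow (x - y)
  have hclosed : IsClosed ((LinearMap.range (T : E →ₗ[ℂ] E) : Submodule ℂ E) : Set E) := by
    rw [LinearMap.coe_range]
    exact hanti.isClosed_range T.uniformContinuous
  haveI : CompleteSpace (LinearMap.range (T : E →ₗ[ℂ] E) : Submodule ℂ E) := hclosed.completeSpace_coe
  have hrange : LinearMap.range (T : E →ₗ[ℂ] E) = ⊤ := by
    rw [← Submodule.orthogonal_eq_bot_iff]
    rw [Submodule.eq_bot_iff]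
    intro y hy
    have h0 : (⟪adjoint T y, adjoint T y⟫) = 0 := by
      rw [adjoint_inner_right]
      exact (Submodule.mem_orthogonal _ y).mp hy _ ⟨adjoint T y, rfl⟩
    have h1 : adjoint T y = 0 := inner_self_eq_zero.mp h0
    have := hadj y
    rw [h1, norm_zero] at this
    exact norm_le_zero_iff.mp this
  let e := ContinuousLinearEquiv.ofBijective T hker hrange
  have hcoe : ⇑e = ⇑T := ContinuousLinearEquiv.coeFn_ofBijective T hker hrange
  have hTsymm : ∀ y : E, T ((e.symm : E →L[ℂ] E) y) = y := by
    intro y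
    conv_lhs => rw [← hcoe]
    exact e.apply_symm_apply y
  have hcomp1 : T * (e.symm : E →L[ℂ] E) = 1 := by
    ext y
    simp only [ContinuousLinearMap.mul_apply, ContinuousLinearMap.one_apply]
    exact hTsymm y
  have hcomp2 : (e.symm : E →L[ℂ] E) * T = 1 := by
    ext x
    simp only [ContinuousLinearMap.mul_apply, ContinuousLinearMap.one_apply]
    conv_lhs => rw [← hcoe]
    exact e.symm_apply_apply x
  let u : (E →L[ℂ] E)ˣ := ⟨T, (e.symm : E →L[ℂ] E), hcomp1, hcomp2⟩
  refine ⟨⟨u, rfl⟩, ?_⟩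
  have hinv : Ring.inverse T = (e.symm : E →L[ℂ] E) := Ring.inverse_unit u
  rw [hinv]
  refine ContinuousLinearMap.opNorm_le_bound _ zero_le_one (fun y => ?_)
  rw [one_mul]
  calc ‖(e.symm : E →L[ℂ] E) y‖ ≤ ‖T ((e.symm : E →L[ℂ] E) y)‖ := hlow _
    _ = ‖y‖ := by rw [hTsymm]

lemma isPositive_real_smul {T : E →L[ℂ] E} (hT : T.IsPositive) {r : ℝ} (hr : 0 ≤ r) :
    (r • T).IsPositive := by
  have hrT : r • T = ((r : ℂ)) • T := by
    rw [← algebraMap_smul ℂ r T, Complex.coe_algebraMap]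
  constructor
  · intro x y
    have hsym := hT.isSelfAdjoint.isSymmetric
    have h1 : (r • T) x = ((r : ℂ)) • T x := by rw [hrT]; rfl
    have h2 : (r • T) y = ((r : ℂ)) • T y := by rw [hrT]; rfl
    show ⟪(r • T) x, y⟫ = ⟪x, (r • T) y⟫
    rw [h1, h2, inner_smul_left, inner_smul_right, Complex.conj_ofReal]
    exact congrArg _ (hsym x y)
  · intro x
    rw [reApplyInnerSelf_apply, hrT]
    have h1 : (((r : ℂ)) • T) x = ((r : ℂ)) • T x := rfl
    rw [h1, inner_smul_left]
    have h2 : 0 ≤ RCLike.re (⟪T x, x⟫) := by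
      simpa [reApplyInnerSelf_apply] using hT.2 x
    have : RCLike.re ((starRingEnd ℂ) ((r : ℂ)) * ⟪T x, x⟫) = r * RCLike.re (⟪T x, x⟫) := by
      rw [Complex.conj_ofReal]
      simp [Complex.mul_re]
    rw [this]
    exact mul_nonneg hr h2

lemma key_identity (α : H →L[ℂ] H) (hα : IsSelfAdjoint α) {z : ℂ}
    (hu : IsUnit (α - z • (1 : H →L[ℂ] H))) :
    Ring.inverse (α - z • (1 : H →L[ℂ] H)) -
        adjoint (Ring.inverse (α - z • (1 : H →L[ℂ] H))) =
      (z - starRingEnd ℂ z) •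
        (Ring.inverse (α - z • (1 : H →L[ℂ] H)) *
          adjoint (Ring.inverse (α - z • (1 : H →L[ℂ] H)))) := by
  set A := α - z • (1 : H →L[ℂ] H) with hA
  set R := Ring.inverse A with hR
  have h1 : A * R = 1 := Ring.mul_inverse_cancel _ hu
  have h2 : R * A = 1 := Ring.inverse_mul_cancel _ hu
  have h3 : star A * star R = 1 := by rw [← star_mul, h2, star_one]
  have hAs : star A - A = (z - starRingEnd ℂ z) • (1 : H →L[ℂ] H) := by
    rw [hA, star_sub, hα.star_eq, star_smul, star_one, sub_smul]
    simp only [starRingEnd_apply]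
    abel
  have hadjR : adjoint R = star R := (star_eq_adjoint R).symm
  rw [hadjR]
  calc R - star R = R * (star A * star R) - (R * A) * star R := by
        rw [h3, h2, mul_one, one_mul]
    _ = R * ((star A - A) * star R) := by noncomm_ring
    _ = (z - starRingEnd ℂ z) • (R * star R) := by
        rw [hAs, smul_mul_assoc, one_mul, mul_smul_comm]

end Stmt15Aux

set_option maxHeartbeats 1000000 in

/-- For selfadjoint `α`, bounded `c : E → H`, `μ_x > 0` and `z ∈ ℂ₊`, with
`R(z) = (α − z)⁻¹` and `T(z) = I − (i/2)μ_x c* R(z) c`, one has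
`Re T(z) = I + ½ (Im z) μ_x c* R(z) R(z)* c ≥ I`; hence `T(z)` is invertible with
`‖T(z)⁻¹‖ ≤ 1`, and `T` is analytic on the upper half-plane. -/
theorem stmt_15 {E H : Type*} [NormedAddCommGroup E] [InnerProductSpace ℂ E] [CompleteSpace E]
    [NormedAddCommGroup H] [InnerProductSpace ℂ H] [CompleteSpace H]
    (α : H →L[ℂ] H) (hα : IsSelfAdjoint α)
    (c : E →L[ℂ] H) (μx : ℝ) (hμx : 0 < μx) (z : ℂ) (hz : 0 < z.im) :
    ((2 : ℝ)⁻¹ •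
        (((1 : E →L[ℂ] E) - (((μx / 2 : ℝ) : ℂ) * Complex.I) •
            ((adjoint c).comp ((Ring.inverse (α - z • 1)).comp c))) +
          adjoint ((1 : E →L[ℂ] E) - (((μx / 2 : ℝ) : ℂ) * Complex.I) •
            ((adjoint c).comp ((Ring.inverse (α - z • 1)).comp c)))) =
      1 + (z.im * μx / 2 : ℝ) •
        ((adjoint c).comp ((Ring.inverse (α - z • 1)).comp
          ((adjoint (Ring.inverse (α - z • 1))).comp c)))) ∧
    ((2 : ℝ)⁻¹ •
        (((1 : E →L[ℂ] E) - (((μx / 2 : ℝ) : ℂ) * Complex.I) •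
            ((adjoint c).comp ((Ring.inverse (α - z • 1)).comp c))) +
          adjoint ((1 : E →L[ℂ] E) - (((μx / 2 : ℝ) : ℂ) * Complex.I) •
            ((adjoint c).comp ((Ring.inverse (α - z • 1)).comp c)))) -
      1).IsPositive ∧
    IsUnit ((1 : E →L[ℂ] E) - (((μx / 2 : ℝ) : ℂ) * Complex.I) •
        ((adjoint c).comp ((Ring.inverse (α - z • 1)).comp c))) ∧
    ‖Ring.inverse ((1 : E →L[ℂ] E) - (((μx / 2 : ℝ) : ℂ) * Complex.I) •
        ((adjoint c).comp ((Ring.inverse (α - z • 1)).comp c)))‖ ≤ 1 ∧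
    AnalyticOnNhd ℂ
      (fun w : ℂ => (1 : E →L[ℂ] E) - (((μx / 2 : ℝ) : ℂ) * Complex.I) •
        ((adjoint c).comp ((Ring.inverse (α - w • 1)).comp c)))
      {w : ℂ | 0 < w.im} := by

  have hu : IsUnit (α - z • (1 : H →L[ℂ] H)) := Stmt15Aux.isUnit_res α hα (ne_of_gt hz)
  set R := Ring.inverse (α - z • (1 : H →L[ℂ] H)) with hRdef
  set Rs := adjoint R with hRsdef
  set κ : ℂ := ((μx / 2 : ℝ) : ℂ) * Complex.I with hκ
  set M : E →L[ℂ] E := (adjoint c).comp (R.comp c) with hM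
  set X : E →L[ℂ] E := (adjoint c).comp (R.comp (Rs.comp c)) with hX
  set T : E →L[ℂ] E := 1 - κ • M with hT
  have hMadj : adjoint M = (adjoint c).comp (Rs.comp c) := by
    rw [hM, adjoint_comp, adjoint_comp, adjoint_adjoint, ContinuousLinearMap.comp_assoc]
  have hκconj : starRingEnd ℂ κ = -κ := by
    rw [hκ, map_mul, Complex.conj_ofReal, Complex.conj_I, mul_neg]
  have hTadj : adjoint T = 1 + κ • ((adjoint c).comp (Rs.comp c)) := by
    rw [hT, ← star_eq_adjoint, star_sub, star_one, star_smul, star_eq_adjoint M, hMadj,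
      ← starRingEnd_apply, hκconj, neg_smul, sub_neg_eq_add]
  have hkey := Stmt15Aux.key_identity α hα hu
  have hMM : M - (adjoint c).comp (Rs.comp c) = (z - starRingEnd ℂ z) • X := by
    rw [hM, ← ContinuousLinearMap.comp_sub, ← ContinuousLinearMap.sub_comp, hkey,
      ContinuousLinearMap.smul_comp, ContinuousLinearMap.comp_smul, hX,
      ContinuousLinearMap.mul_def, ContinuousLinearMap.comp_assoc]
  have h2im : κ * (z - starRingEnd ℂ z) = -((z.im * μx : ℝ) : ℂ) := by
    rw [Complex.sub_conj, hκ]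
    push_cast
    ring_nf
    rw [Complex.I_sq]
    ring
  have hsum : T + adjoint T = (2 : ℝ) • (1 : E →L[ℂ] E) + (z.im * μx : ℝ) • X := by
    rw [hTadj]
    have expand : T + (1 + κ • ((adjoint c).comp (Rs.comp c)))
        = (2 : ℝ) • (1 : E →L[ℂ] E) - κ • (M - (adjoint c).comp (Rs.comp c)) := by
      rw [hT]; module
    rw [expand, hMM, smul_smul, h2im, neg_smul, sub_neg_eq_add,
      show ((z.im * μx : ℝ) : ℂ) = algebraMap ℝ ℂ (z.im * μx) from rfl,
      algebraMap_smul]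
  have hconj1 : (2 : ℝ)⁻¹ • (T + adjoint T) = 1 + (z.im * μx / 2 : ℝ) • X := by
    rw [hsum]
    match_scalars
    · norm_num
    · ring
  have hXpos : X.IsPositive := by
    have h1 : ((adjoint (Rs.comp c)).comp (Rs.comp c)).IsPositive := by
      simpa [ContinuousLinearMap.one_def] using (ContinuousLinearMap.isPositive_one (E := H)).adjoint_conj (Rs.comp c)
    have h2 : X = (adjoint (Rs.comp c)).comp (Rs.comp c) := by
      rw [adjoint_comp, hRsdef, adjoint_adjoint, hX, ContinuousLinearMap.comp_assoc]
    rw [h2]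
    exact h1
  have hpos : ((2 : ℝ)⁻¹ • (T + adjoint T) - 1).IsPositive := by
    rw [hconj1, add_sub_cancel_left]
    exact Stmt15Aux.isPositive_real_smul hXpos (by positivity)
  have hcoer : ∀ x : E, ‖x‖ ^ 2 ≤ RCLike.re (@inner ℂ _ _ (T x) x) := by
    intro x
    have h0 := hpos.2 x
    rw [ContinuousLinearMap.reApplyInnerSelf_apply] at h0
    have e1 : (((2 : ℝ)⁻¹ • (T + adjoint T)) - 1) x
        = (2 : ℝ)⁻¹ • (T x + adjoint T x) - x := rfl
    have e2 : @inner ℂ _ _ (adjoint T x) x = starRingEnd ℂ (@inner ℂ _ _ (T x) x) := by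
      rw [adjoint_inner_left, ← inner_conj_symm]
    have e4 : (2 : ℝ)⁻¹ • (T x + adjoint T x)
        = (((2 : ℝ)⁻¹ : ℝ) : ℂ) • (T x + adjoint T x) := by
      rw [← algebraMap_smul ℂ ((2 : ℝ)⁻¹) (T x + adjoint T x), Complex.coe_algebraMap]
    have e3 : RCLike.re (@inner ℂ _ _ ((((2 : ℝ)⁻¹ • (T + adjoint T)) - 1) x) x)
        = RCLike.re (@inner ℂ _ _ (T x) x) - ‖x‖ ^ 2 := by
      rw [e1, inner_sub_left, e4, inner_smul_left, inner_add_left, e2, map_sub,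
        inner_self_eq_norm_sq (𝕜 := ℂ) x]
      congr 1
      simp only [RCLike.re_to_complex, Complex.conj_ofReal, Complex.mul_re, Complex.add_re,
        Complex.conj_re, Complex.add_im, Complex.conj_im, Complex.ofReal_re, Complex.ofReal_im]
      ring
    rw [e3] at h0
    linarith
  obtain ⟨hu2, hn2⟩ := Stmt15Aux.coercive_isUnit T hcoer
  refine ⟨hconj1, hpos, hu2, hn2, ?_⟩
  set L : (H →L[ℂ] H) →L[ℂ] (E →L[ℂ] E) :=
    ((ContinuousLinearMap.compL ℂ E H E) (adjoint c)).comp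
      ((ContinuousLinearMap.compL ℂ E H H).flip c) with hL
  have hInner : AnalyticOnNhd ℂ (fun w : ℂ => Ring.inverse (α - w • (1 : H →L[ℂ] H)))
      {w : ℂ | 0 < w.im} := by
    intro w hw
    have huw : IsUnit (α - w • (1 : H →L[ℂ] H)) := Stmt15Aux.isUnit_res α hα (ne_of_gt hw)
    have h1 : AnalyticAt ℂ (fun w : ℂ => α - w • (1 : H →L[ℂ] H)) w :=
      analyticAt_const.sub (analyticAt_id.smul analyticAt_const)
    have h2 : AnalyticAt ℂ (Ring.inverse : (H →L[ℂ] H) → (H →L[ℂ] H)) (α - w • 1) := by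
      have := analyticAt_inverse (𝕜 := ℂ) huw.unit
      rwa [IsUnit.unit_spec] at this
    have h3 : AnalyticAt ℂ ((Ring.inverse : (H →L[ℂ] H) → (H →L[ℂ] H)) ∘
        (fun w : ℂ => α - w • (1 : H →L[ℂ] H))) w :=
      AnalyticAt.comp (f := fun w : ℂ => α - w • (1 : H →L[ℂ] H)) h2 h1
    exact h3
  have hcomp := L.comp_analyticOnNhd hInner
  intro w hw
  refine analyticAt_const.sub (AnalyticAt.const_smul (c := κ)
    (f := fun w : ℂ => (adjoint c).comp ((Ring.inverse (α - w • (1 : H →L[ℂ] H))).comp c)) ?_)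
  exact hcomp w hw
end

section
/- Let α be a selfadjoint operator on H, c : E → H bounded, μ_x > 0, and for z ∈ ℂ₊ set B(z) = [I + (i/2) μ_x c*(α − zI)⁻¹ c][I − (i/2) μ_x c*(α − zI)⁻¹ c]⁻¹ on E. Then ‖B(z)‖ ≤ 1 for all z ∈ ℂ₊; i.e., B is an analytic contraction-valued function on the upper half-plane. -/
open ContinuousLinearMap
open scoped InnerProductSpace

section Aux

variable {E : Type*} [NormedAddCommGroup E] [InnerProductSpace ℂ E] [CompleteSpace E]

omit [CompleteSpace E] in
lemma aux_norm_le (A : E →L[ℂ] E) (hA : ∀ y : E, (⟪A y, y⟫_ℂ).re ≤ 0) (y : E) :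
    ‖y + A y‖ ≤ ‖y - A y‖ ∧ ‖y‖ ≤ ‖y - A y‖ := by
  have h1 : ‖y - A y‖ ^ 2 = ‖y‖ ^ 2 - 2 * (⟪y, A y⟫_ℂ).re + ‖A y‖ ^ 2 := by
    simpa using @norm_sub_sq ℂ E _ _ _ y (A y)
  have h2 : ‖y + A y‖ ^ 2 = ‖y‖ ^ 2 + 2 * (⟪y, A y⟫_ℂ).re + ‖A y‖ ^ 2 := by
    simpa using @norm_add_sq ℂ E _ _ _ y (A y)
  have h3 : (⟪y, A y⟫_ℂ).re ≤ 0 := by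
    rw [← inner_conj_symm y (A y), Complex.conj_re]
    exact hA y
  constructor
  · have hsq : ‖y + A y‖ ^ 2 ≤ ‖y - A y‖ ^ 2 := by nlinarith
    nlinarith [norm_nonneg (y + A y), norm_nonneg (y - A y)]
  · have hsq : ‖y‖ ^ 2 ≤ ‖y - A y‖ ^ 2 := by nlinarith [sq_nonneg ‖A y‖]
    nlinarith [norm_nonneg y, norm_nonneg (y - A y)]

lemma aux_adjoint_re (A : E →L[ℂ] E) (hA : ∀ y : E, (⟪A y, y⟫_ℂ).re ≤ 0) (y : E) :
    (⟪(adjoint A) y, y⟫_ℂ).re ≤ 0 := by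
  rw [ContinuousLinearMap.adjoint_inner_left, ← inner_conj_symm y (A y), Complex.conj_re]
  exact hA y

lemma aux_isUnit_s16 (A : E →L[ℂ] E) (hA : ∀ y : E, (⟪A y, y⟫_ℂ).re ≤ 0) :
    IsUnit ((1 : E →L[ℂ] E) - A) := by
  set D : E →L[ℂ] E := 1 - A with hD
  have hbound : ∀ y : E, ‖y‖ ≤ ‖D y‖ := fun y => by
    simpa [hD, sub_apply] using (aux_norm_le A hA y).2
  have hbound' : ∀ y : E, ‖y‖ ≤ ‖(adjoint D) y‖ := by
    intro y
    have h : adjoint D = 1 - adjoint A := by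
      rw [← star_eq_adjoint, ← star_eq_adjoint, hD, star_sub, star_one]
    rw [h]
    simpa [sub_apply] using (aux_norm_le (adjoint A) (aux_adjoint_re A hA) y).2
  rw [ContinuousLinearMap.isUnit_iff_bijective]
  constructor
  · intro x y hxy
    have h0 : D (x - y) = 0 := by rw [map_sub, hxy, sub_self]
    have := hbound (x - y)
    rw [h0, norm_zero] at this
    have := le_antisymm this (norm_nonneg _)
    rwa [norm_eq_zero, sub_eq_zero] at this
  · -- surjectivity
    set K : Submodule ℂ E := LinearMap.range (D : E →ₗ[ℂ] E) with hK
    have hanti : AntilipschitzWith 1 D :=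
      ContinuousLinearMap.antilipschitz_of_bound D (by simpa using hbound)
    have hclosed : IsClosed (K : Set E) := by
      have := hanti.isClosed_range D.uniformContinuous
      simpa [hK, LinearMap.coe_range] using this
    haveI : CompleteSpace K := hclosed.completeSpace_coe
    have horth : Kᗮ = ⊥ := by
      rw [Submodule.eq_bot_iff]
      intro x hx
      have hx' := (Submodule.mem_orthogonal K x).mp hx
      have h1 : ⟪D ((adjoint D) x), x⟫_ℂ = 0 :=
        hx' _ (LinearMap.mem_range_self _ _)
      have h2 : ⟪(adjoint D) x, (adjoint D) x⟫_ℂ = 0 := by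
        rw [ContinuousLinearMap.adjoint_inner_left, ← inner_conj_symm, h1, map_zero]
      have h3 : (adjoint D) x = 0 := inner_self_eq_zero.mp h2
      have := hbound' x
      rw [h3, norm_zero] at this
      have := le_antisymm this (norm_nonneg _)
      rwa [norm_eq_zero] at this
    have hKtop : K = ⊤ := Submodule.orthogonal_eq_bot_iff.mp horth
    intro x
    have : x ∈ K := hKtop ▸ Submodule.mem_top
    obtain ⟨y, hy⟩ := this
    exact ⟨y, hy⟩

lemma aux_contraction (A : E →L[ℂ] E) (hA : ∀ y : E, (⟪A y, y⟫_ℂ).re ≤ 0) :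
    ‖((1 : E →L[ℂ] E) + A) * Ring.inverse (1 - A)‖ ≤ 1 := by
  have hu := aux_isUnit_s16 A hA
  refine ContinuousLinearMap.opNorm_le_bound _ zero_le_one fun x => ?_
  set y : E := Ring.inverse ((1 : E →L[ℂ] E) - A) x with hy
  have hxy : ((1 : E →L[ℂ] E) - A) y = x := by
    have h := Ring.mul_inverse_cancel _ hu
    calc ((1 : E →L[ℂ] E) - A) y
        = (((1 : E →L[ℂ] E) - A) * Ring.inverse ((1 : E →L[ℂ] E) - A)) x := rfl
      _ = x := by rw [h]; rfl
  calc ‖(((1 : E →L[ℂ] E) + A) * Ring.inverse (1 - A)) x‖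
      = ‖y + A y‖ := by simp [ContinuousLinearMap.mul_apply, hy, add_apply]
    _ ≤ ‖y - A y‖ := (aux_norm_le A hA y).1
    _ = ‖x‖ := by rw [← hxy]; simp [sub_apply]
    _ = 1 * ‖x‖ := (one_mul _).symm

end Aux

section Main

variable {E H : Type*} [NormedAddCommGroup E] [InnerProductSpace ℂ E] [CompleteSpace E]
  [NormedAddCommGroup H] [InnerProductSpace ℂ H] [CompleteSpace H]

lemma aux_resolvent_isUnit (α : H →L[ℂ] H) (hα : IsSelfAdjoint α) {z : ℂ} (hz : 0 < z.im) :
    IsUnit (α - z • (1 : H →L[ℂ] H)) := by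
  have hz' : z ∉ spectrum ℂ α := fun hmem => by
    have := hα.im_eq_zero_of_mem_spectrum hmem
    linarith
  have h := spectrum.notMem_iff.mp hz'
  have heq : α - z • (1 : H →L[ℂ] H) = -(algebraMap ℂ (H →L[ℂ] H) z - α) := by
    rw [Algebra.algebraMap_eq_smul_one, neg_sub]
  rw [heq]
  exact h.neg

lemma aux_re_nonpos (α : H →L[ℂ] H) (hα : IsSelfAdjoint α) (c : E →L[ℂ] H) (μx : ℝ)
    (hμx : 0 < μx) {z : ℂ} (hz : 0 < z.im) (y : E) :
    (⟪((((μx / 2 : ℝ) : ℂ) * Complex.I) •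
        ((adjoint c).comp ((Ring.inverse (α - z • 1)).comp c))) y, y⟫_ℂ).re ≤ 0 := by
  have hu := aux_resolvent_isUnit α hα hz
  set R : H →L[ℂ] H := Ring.inverse (α - z • (1 : H →L[ℂ] H)) with hR
  set u : H := R (c y) with hu'
  have hcy : (α - z • (1 : H →L[ℂ] H)) u = c y := by
    have h := Ring.mul_inverse_cancel _ hu
    calc (α - z • (1 : H →L[ℂ] H)) u
        = ((α - z • (1 : H →L[ℂ] H)) * R) (c y) := rfl
      _ = c y := by rw [h]; rfl
  set w : ℂ := ⟪R (c y), c y⟫_ℂ with hw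
  have hwim : w.im ≤ 0 := by
    have hw2 : w = ⟪u, α u⟫_ℂ - z * ((‖u‖ ^ 2 : ℝ) : ℂ) := by
      have h0 : w = ⟪u, (α - z • (1 : H →L[ℂ] H)) u⟫_ℂ := by rw [hcy]
      rw [h0]
      simp only [ContinuousLinearMap.sub_apply, ContinuousLinearMap.smul_apply,
        ContinuousLinearMap.one_apply, inner_sub_right, inner_smul_right]
      rw [@inner_self_eq_norm_sq_to_K ℂ]
      norm_cast
    have him : (⟪u, α u⟫_ℂ).im = 0 := by
      have h1 : (starRingEnd ℂ) ⟪u, α u⟫_ℂ = ⟪u, α u⟫_ℂ := by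
        rw [inner_conj_symm]
        calc ⟪α u, u⟫_ℂ = ⟪(adjoint α) u, u⟫_ℂ := by rw [hα.adjoint_eq]
          _ = ⟪u, α u⟫_ℂ := ContinuousLinearMap.adjoint_inner_left α u u
      exact Complex.conj_eq_iff_im.mp h1
    have h5 : w.im = -(z.im * ‖u‖ ^ 2) := by
      rw [hw2]
      simp [him, Complex.sub_im, Complex.mul_im, ← Complex.ofReal_pow]
    have h6 : 0 ≤ z.im * ‖u‖ ^ 2 := by positivity
    linarith
  -- now compute the real part
  have key : (⟪((((μx / 2 : ℝ) : ℂ) * Complex.I) •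
        ((adjoint c).comp ((Ring.inverse (α - z • 1)).comp c))) y, y⟫_ℂ)
      = (starRingEnd ℂ) (((μx / 2 : ℝ) : ℂ) * Complex.I) * w := by
    rw [ContinuousLinearMap.smul_apply, inner_smul_left]
    congr 1
    calc ⟪((adjoint c).comp ((Ring.inverse (α - z • 1)).comp c)) y, y⟫_ℂ
        = ⟪(adjoint c) (R (c y)), y⟫_ℂ := rfl
      _ = ⟪R (c y), c y⟫_ℂ := by rw [ContinuousLinearMap.adjoint_inner_left]
  rw [key]
  have : ((starRingEnd ℂ) (((μx / 2 : ℝ) : ℂ) * Complex.I) * w).re = (μx / 2) * w.im := by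
    rw [map_mul, Complex.conj_I, Complex.conj_ofReal]
    simp [Complex.mul_re, Complex.mul_im]
  rw [this]
  nlinarith

end Main


/-- The Blaschke–Potapov-type factor
`B(z) = [I + (i/2)μ_x c*(α − z)⁻¹c][I − (i/2)μ_x c*(α − z)⁻¹c]⁻¹` is an analytic
contraction-valued function on the upper half-plane. -/
theorem stmt_16 {E H : Type*} [NormedAddCommGroup E] [InnerProductSpace ℂ E] [CompleteSpace E]
    [NormedAddCommGroup H] [InnerProductSpace ℂ H] [CompleteSpace H]
    (α : H →L[ℂ] H) (hα : IsSelfAdjoint α)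
    (c : E →L[ℂ] H) (μx : ℝ) (hμx : 0 < μx) :
    (∀ z : ℂ, 0 < z.im →
      ‖((1 : E →L[ℂ] E) + (((μx / 2 : ℝ) : ℂ) * Complex.I) •
          ((adjoint c).comp ((Ring.inverse (α - z • 1)).comp c))) *
        Ring.inverse ((1 : E →L[ℂ] E) - (((μx / 2 : ℝ) : ℂ) * Complex.I) •
          ((adjoint c).comp ((Ring.inverse (α - z • 1)).comp c)))‖ ≤ 1) ∧
    AnalyticOnNhd ℂ
      (fun z : ℂ =>
        ((1 : E →L[ℂ] E) + (((μx / 2 : ℝ) : ℂ) * Complex.I) •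
          ((adjoint c).comp ((Ring.inverse (α - z • 1)).comp c))) *
        Ring.inverse ((1 : E →L[ℂ] E) - (((μx / 2 : ℝ) : ℂ) * Complex.I) •
          ((adjoint c).comp ((Ring.inverse (α - z • 1)).comp c))))
      {z : ℂ | 0 < z.im} := by
  set κ : ℂ := ((μx / 2 : ℝ) : ℂ) * Complex.I with hκ
  set S : ℂ → E →L[ℂ] E := fun z =>
    κ • ((adjoint c).comp ((Ring.inverse (α - z • 1)).comp c)) with hS
  constructor
  · intro z hz
    exact aux_contraction _ (fun y => aux_re_nonpos α hα c μx hμx hz y)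
  · intro z hz
    replace hz : 0 < z.im := hz
    have h1 : AnalyticAt ℂ (fun w : ℂ => α - w • (1 : H →L[ℂ] H)) z :=
      analyticAt_const.sub ((analyticAt_id).smul analyticAt_const)
    have hu := aux_resolvent_isUnit α hα hz
    have h2 : AnalyticAt ℂ (fun w : ℂ => Ring.inverse (α - w • (1 : H →L[ℂ] H))) z := by
      have h3 := analyticAt_inverse (𝕜 := ℂ) hu.unit
      rw [IsUnit.unit_spec] at h3
      exact h3.comp (f := fun w : ℂ => α - w • (1 : H →L[ℂ] H)) h1
    have h4 : AnalyticAt ℂ S z := by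
      set Ψ : (H →L[ℂ] H) →L[ℂ] (E →L[ℂ] E) :=
        κ • (((ContinuousLinearMap.compL ℂ E H E) (adjoint c)).comp
          ((ContinuousLinearMap.compL ℂ E H H).flip c)) with hΨ
      exact (Ψ.analyticAt (Ring.inverse (α - z • (1 : H →L[ℂ] H)))).comp
        (f := fun w : ℂ => Ring.inverse (α - w • (1 : H →L[ℂ] H))) h2
    have h6 : AnalyticAt ℂ (fun w => (1 : E →L[ℂ] E) + S w) z := analyticAt_const.add h4
    have h7 : IsUnit ((1 : E →L[ℂ] E) - S z) :=
      aux_isUnit_s16 _ (fun y => aux_re_nonpos α hα c μx hμx hz y)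
    have h8 : AnalyticAt ℂ (fun w => Ring.inverse ((1 : E →L[ℂ] E) - S w)) z := by
      have h9 := analyticAt_inverse (𝕜 := ℂ) h7.unit
      rw [IsUnit.unit_spec] at h9
      have h10 : AnalyticAt ℂ (fun w => (1 : E →L[ℂ] E) - S w) z := analyticAt_const.sub h4
      exact h9.comp (f := fun w => (1 : E →L[ℂ] E) - S w) h10
    exact h6.mul h8
end
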